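/- arXiv:2009.12290 — 4 statements merged into one kernel-verified Lean document; each statement's English description precedes it below -/
import Mathlib

section
/- If A is an n×n completely positive matrix and A = A₁ ⊕ A₂ ⊕ ⋯ ⊕ A_m is a direct sum decomposition where each A_i has k_i distinct CP factorizations (finitely many), then A has exactly ∏_{i=1}^m k_i distinct CP factorizations. -/
open Matrix

/-- A CP representation of `A`: a multiset of nonnegative, nonzero, pairwise linearly
independent vectors whose rank-one outer products sum to `A`. Counted as a multiset,
i.e. up to reordering of the summands (columns). -/
def IsCPRep {n : ℕ} (A : Matrix (Fin n) (Fin n) ℝ) (L : Multiset (Fin n → ℝ)) : Prop :=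
  (∀ b ∈ L, ∀ i, 0 ≤ b i) ∧ (∀ b ∈ L, b ≠ 0) ∧
  L.Pairwise (fun b c => LinearIndependent ℝ ![b, c]) ∧
  (L.map fun b => vecMulVec b b).sum = A

/-- `A` is completely positive. -/
def IsCP {n : ℕ} (A : Matrix (Fin n) (Fin n) ℝ) : Prop := ∃ L, IsCPRep A L

/-- The cp-rank: minimal number of rank-one summands in a CP representation. -/
noncomputable def cpRank {n : ℕ} (A : Matrix (Fin n) (Fin n) ℝ) : ℕ :=
  sInf {k | ∃ L, IsCPRep A L ∧ Multiset.card L = k}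

/-- A minimal CP representation: a CP representation with `cpRank A` summands. -/
def IsMinCPRep {n : ℕ} (A : Matrix (Fin n) (Fin n) ℝ) (L : Multiset (Fin n → ℝ)) : Prop :=
  IsCPRep A L ∧ Multiset.card L = cpRank A

/-- The graph of a symmetric matrix: `i ~ j` iff `i ≠ j` and `A i j ≠ 0`. -/
def matGraph {n : ℕ} (A : Matrix (Fin n) (Fin n) ℝ) : SimpleGraph (Fin n) where
  Adj i j := i ≠ j ∧ (A i j ≠ 0 ∨ A j i ≠ 0)
  symm := ⟨fun _ _ h => ⟨h.1.symm, h.2.symm⟩⟩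
  loopless := ⟨fun _ h => h.1 rfl⟩

/-- The comparison matrix `M(A)`. -/
noncomputable def compMatrix {n : ℕ} (A : Matrix (Fin n) (Fin n) ℝ) : Matrix (Fin n) (Fin n) ℝ :=
  fun i j => if i = j then |A i j| else -|A i j|

/-- CP representation, for a general (finite, decidable) index type. -/
def IsCPRepG {ι : Type} [Fintype ι] [DecidableEq ι]
    (A : Matrix ι ι ℝ) (L : Multiset (ι → ℝ)) : Prop :=
  (∀ b ∈ L, ∀ i, 0 ≤ b i) ∧ (∀ b ∈ L, b ≠ 0) ∧
  L.Pairwise (fun b c => LinearIndependent ℝ ![b, c]) ∧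
  (L.map fun b => vecMulVec b b).sum = A

section CPAux

attribute [local instance] Classical.propDecidable

variable {m : ℕ} {d : Fin m → ℕ}

/-- Extension of a block vector by zero. -/
def cpExt (i : Fin m) (v : Fin (d i) → ℝ) : (Σ j, Fin (d j)) → ℝ :=
  fun p => if h : p.1 = i then v (h ▸ p.2) else 0

/-- Restriction of a vector to a block. -/
def cpRes (i : Fin m) (b : (Σ j, Fin (d j)) → ℝ) : Fin (d i) → ℝ :=
  fun x => b ⟨i, x⟩

lemma cpExt_mk (i : Fin m) (v : Fin (d i) → ℝ) (x : Fin (d i)) :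
    cpExt i v ⟨i, x⟩ = v x := by
  simp [cpExt]

lemma cpExt_ne (i : Fin m) (v : Fin (d i) → ℝ) (p : Σ j, Fin (d j)) (h : p.1 ≠ i) :
    cpExt i v p = 0 := dif_neg h

lemma cpRes_cpExt (i : Fin m) (v : Fin (d i) → ℝ) : cpRes i (cpExt i v) = v :=
  funext fun x => cpExt_mk i v x

lemma cpExt_cpRes {i : Fin m} {b : (Σ j, Fin (d j)) → ℝ}
    (h : ∀ p : Σ j, Fin (d j), p.1 ≠ i → b p = 0) : cpExt i (cpRes i b) = b := by
  funext p
  rcases p with ⟨j, x⟩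
  by_cases hj : j = i
  · subst hj; exact cpExt_mk j _ x
  · rw [cpExt_ne _ _ _ hj]; exact (h ⟨j, x⟩ hj).symm

lemma msum_apply {ι : Type*} (s : Multiset (Matrix ι ι ℝ)) (p q : ι) :
    s.sum p q = (s.map fun M => M p q).sum := by
  induction s using Multiset.induction_on with
  | empty => simp
  | cons a s ih => simp [Matrix.add_apply, ih]

lemma multiset_pairwise_map_of {α β : Type*} {r : α → α → Prop} {r' : β → β → Prop} {f : α → β}
    {s : Multiset α} (h : s.Pairwise r)
    (hf : ∀ a ∈ s, ∀ b ∈ s, r a b → r' (f a) (f b)) : (s.map f).Pairwise r' := by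
  obtain ⟨l, rfl, hp⟩ := h
  refine ⟨l.map f, by simp, List.pairwise_map.2 ?_⟩
  exact List.Pairwise.imp_of_mem
    (fun {a b} ha hb hr => hf _ (by simpa using ha) _ (by simpa using hb) hr) hp

lemma multiset_pairwise_filter {α : Type*} {r : α → α → Prop} {s : Multiset α}
    (p : α → Prop) [DecidablePred p] (h : s.Pairwise r) : (s.filter p).Pairwise r := by
  obtain ⟨l, rfl, hp⟩ := h
  exact ⟨l.filter p, by simp, List.Pairwise.sublist List.filter_sublist hp⟩

lemma multiset_pairwise_add {α : Type*} {r : α → α → Prop} {s t : Multiset α}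
    (hs : s.Pairwise r) (ht : t.Pairwise r)
    (hst : ∀ a ∈ s, ∀ b ∈ t, r a b) : (s + t).Pairwise r := by
  obtain ⟨l, rfl, hl⟩ := hs
  obtain ⟨l', rfl, hl'⟩ := ht
  refine ⟨l ++ l', by simp [Multiset.coe_add], List.pairwise_append.2 ⟨hl, hl', ?_⟩⟩
  exact fun a ha b hb => hst a (by simpa using ha) b (by simpa using hb)

lemma multiset_pairwise_finsetSum {α β : Type*} {r : α → α → Prop} (t : Finset β)
    (g : β → Multiset α) (h1 : ∀ i ∈ t, (g i).Pairwise r)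
    (h2 : ∀ i ∈ t, ∀ j ∈ t, i ≠ j → ∀ a ∈ g i, ∀ b ∈ g j, r a b) :
    (∑ i ∈ t, g i).Pairwise r := by
  classical
  induction t using Finset.induction_on with
  | empty => simpa using Multiset.pairwise_zero r
  | @insert i0 t hi0 ih =>
    rw [Finset.sum_insert hi0]
    refine multiset_pairwise_add (h1 i0 (Finset.mem_insert_self _ _))
      (ih (fun i hi => h1 i (Finset.mem_insert_of_mem hi))
        (fun i hi j hj => h2 i (Finset.mem_insert_of_mem hi) j (Finset.mem_insert_of_mem hj)))
      ?_
    intro a ha b hb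
    obtain ⟨j, hj, hbj⟩ := Multiset.mem_sum.1 hb
    exact h2 i0 (Finset.mem_insert_self _ _) j (Finset.mem_insert_of_mem hj)
      (fun h => hi0 (h ▸ hj)) a ha b hbj

lemma li_ext_ext_ne {i j : Fin m} (hij : i ≠ j) {v : Fin (d i) → ℝ} {w : Fin (d j) → ℝ}
    (hv : v ≠ 0) (hw : w ≠ 0) :
    LinearIndependent ℝ ![cpExt i v, cpExt j w] := by
  rw [LinearIndependent.pair_iff]
  intro s t hst
  obtain ⟨x, hx⟩ := Function.ne_iff.1 hv
  obtain ⟨y, hy⟩ := Function.ne_iff.1 hw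
  have h1 := congrFun hst ⟨i, x⟩
  have h2 := congrFun hst ⟨j, y⟩
  simp only [Pi.add_apply, Pi.smul_apply, smul_eq_mul, Pi.zero_apply] at h1 h2
  rw [cpExt_mk, cpExt_ne j w ⟨i, x⟩ (by simpa using hij)] at h1
  rw [cpExt_mk, cpExt_ne i v ⟨j, y⟩ (by simpa using hij.symm)] at h2
  constructor
  · have : s * v x = 0 := by linarith
    exact (mul_eq_zero.1 this).resolve_right hx
  · have : t * w y = 0 := by linarith
    exact (mul_eq_zero.1 this).resolve_right hy

lemma li_ext_of_li {i : Fin m} {v w : Fin (d i) → ℝ}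
    (h : LinearIndependent ℝ ![v, w]) :
    LinearIndependent ℝ ![cpExt i v, cpExt i w] := by
  rw [LinearIndependent.pair_iff] at h ⊢
  intro s t hst
  refine h s t (funext fun x => ?_)
  have := congrFun hst ⟨i, x⟩
  simpa [cpExt_mk] using this

lemma li_res_of_li {i : Fin m} {b c : (Σ j, Fin (d j)) → ℝ}
    (hb : ∀ p : Σ j, Fin (d j), p.1 ≠ i → b p = 0)
    (hc : ∀ p : Σ j, Fin (d j), p.1 ≠ i → c p = 0)
    (h : LinearIndependent ℝ ![b, c]) :
    LinearIndependent ℝ ![cpRes i b, cpRes i c] := by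
  rw [LinearIndependent.pair_iff] at h ⊢
  intro s t hst
  refine h s t (funext fun p => ?_)
  rcases p with ⟨j, x⟩
  by_cases hj : j = i
  · subst hj
    have := congrFun hst x
    simpa [cpRes] using this
  · simp [hb ⟨j, x⟩ hj, hc ⟨j, x⟩ hj]

variable {Ai : ∀ i, Matrix (Fin (d i)) (Fin (d i)) ℝ}

lemma support_of_mem {L : Multiset ((Σ j, Fin (d j)) → ℝ)}
    (hL : IsCPRepG (Matrix.blockDiagonal' Ai) L) {b : (Σ j, Fin (d j)) → ℝ} (hb : b ∈ L) :
    ∃ i, ∀ p : Σ j, Fin (d j), p.1 ≠ i → b p = 0 := by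
  obtain ⟨hnn, hnz, _, hsum⟩ := hL
  obtain ⟨p0, hp0⟩ := Function.ne_iff.1 (hnz b hb)
  refine ⟨p0.1, fun q hq => ?_⟩
  have hApq : Matrix.blockDiagonal' Ai p0 q = 0 := by
    obtain ⟨i0, x⟩ := p0
    obtain ⟨j, y⟩ := q
    exact Matrix.blockDiagonal'_apply_ne Ai x y (fun h => hq h.symm)
  have hentry : ((L.map fun b => b p0 * b q).sum : ℝ) = 0 := by
    have := congrFun (congrFun hsum p0) q
    rw [msum_apply, Multiset.map_map] at this
    simpa [Function.comp_def, Matrix.vecMulVec_apply, hApq] using this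
  have hmem : b p0 * b q ∈ L.map fun b => b p0 * b q :=
    Multiset.mem_map_of_mem _ hb
  have hle : b p0 * b q ≤ 0 := by
    rw [← hentry]
    refine Multiset.single_le_sum ?_ _ hmem
    intro z hz
    obtain ⟨c, hc, rfl⟩ := Multiset.mem_map.1 hz
    exact mul_nonneg (hnn c hc p0) (hnn c hc q)
  have hzero : b p0 * b q = 0 :=
    le_antisymm hle (mul_nonneg (hnn b hb p0) (hnn b hb q))
  exact (mul_eq_zero.1 hzero).resolve_left hp0

lemma supported_of_P {L : Multiset ((Σ j, Fin (d j)) → ℝ)}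
    (hL : IsCPRepG (Matrix.blockDiagonal' Ai) L) {b : (Σ j, Fin (d j)) → ℝ} (hb : b ∈ L)
    {i : Fin m} (h : ∃ x, b ⟨i, x⟩ ≠ 0) :
    ∀ p : Σ j, Fin (d j), p.1 ≠ i → b p = 0 := by
  obtain ⟨i0, hi0⟩ := support_of_mem hL hb
  obtain ⟨x, hx⟩ := h
  have hii : i = i0 := by
    by_contra hne
    exact hx (hi0 ⟨i, x⟩ hne)
  subst hii
  exact hi0

lemma existsUnique_P {L : Multiset ((Σ j, Fin (d j)) → ℝ)}
    (hL : IsCPRepG (Matrix.blockDiagonal' Ai) L) {b : (Σ j, Fin (d j)) → ℝ} (hb : b ∈ L) :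
    ∃! i, ∃ x, b ⟨i, x⟩ ≠ 0 := by
  obtain ⟨i, hi⟩ := support_of_mem hL hb
  obtain ⟨p0, hp0⟩ := Function.ne_iff.1 (hL.2.1 b hb)
  have hpi : p0.1 = i := by
    by_contra h
    exact hp0 (hi p0 h)
  obtain ⟨j, x⟩ := p0
  subst hpi
  refine ⟨j, ⟨x, hp0⟩, ?_⟩
  rintro i' ⟨x', hx'⟩
  by_contra hne
  exact hx' (hi ⟨i', x'⟩ hne)

lemma filter_finsetSum {α β : Type*} (p : α → Prop) [DecidablePred p]
    (t : Finset β) (g : β → Multiset α) :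
    (∑ i ∈ t, g i).filter p = ∑ i ∈ t, (g i).filter p := by
  classical
  induction t using Finset.induction_on with
  | empty => simp
  | @insert i0 t hi0 ih => simp [Finset.sum_insert hi0, Multiset.filter_add, ih]

lemma sum_finsetSum {α β : Type*} [AddCommMonoid α] (t : Finset β) (g : β → Multiset α) :
    (∑ i ∈ t, g i).sum = ∑ i ∈ t, (g i).sum := by
  classical
  induction t using Finset.induction_on with
  | empty => simp
  | @insert i0 t hi0 ih => simp [Finset.sum_insert hi0, ih]

lemma cp_map_finsetSum {α β γ : Type*} (f : α → γ) (t : Finset β) (g : β → Multiset α) :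
    (∑ i ∈ t, g i).map f = ∑ i ∈ t, (g i).map f := by
  classical
  induction t using Finset.induction_on with
  | empty => simp
  | @insert i0 t hi0 ih => simp [Finset.sum_insert hi0, ih]

lemma sum_filter_partition {α : Type*} {κ : Type*} [Fintype κ] (p : κ → α → Prop)
    [∀ i, DecidablePred (p i)] {L : Multiset α}
    (h : ∀ b ∈ L, ∃! i, p i b) : (∑ i : κ, L.filter (p i)) = L := by
  induction L using Multiset.induction_on with
  | empty => simp
  | cons a L ih =>
    simp only [Multiset.filter_cons]
    rw [Finset.sum_add_distrib, ih (fun b hb => h b (Multiset.mem_cons_of_mem hb))]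
    obtain ⟨i0, hi0, huniq⟩ := h a (Multiset.mem_cons_self a L)
    have : (∑ i : κ, if p i a then ({a} : Multiset α) else 0) = {a} := by
      rw [Finset.sum_eq_single i0]
      · exact if_pos hi0
      · intro j _ hj
        exact if_neg (fun hpj => hj (huniq j hpj))
      · intro h'; exact absurd (Finset.mem_univ i0) h'
    rw [this, Multiset.singleton_add]

/-- Combine CP representations of the blocks into one of the block matrix. -/
noncomputable def cpPhi (F : ∀ i, Multiset (Fin (d i) → ℝ)) :
    Multiset ((Σ j, Fin (d j)) → ℝ) :=
  ∑ i, (F i).map (cpExt i)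

/-- Split a CP representation of the block matrix into ones of the blocks. -/
noncomputable def cpPsi (L : Multiset ((Σ j, Fin (d j)) → ℝ)) (i : Fin m) :
    Multiset (Fin (d i) → ℝ) :=
  (L.filter fun b => ∃ x, b ⟨i, x⟩ ≠ 0).map (cpRes i)

lemma isCPRepG_cpPhi {F : ∀ i, Multiset (Fin (d i) → ℝ)} (hF : ∀ i, IsCPRepG (Ai i) (F i)) :
    IsCPRepG (Matrix.blockDiagonal' Ai) (cpPhi F) := by
  have hmem : ∀ b ∈ cpPhi F, ∃ i, ∃ v ∈ F i, cpExt i v = b := by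
    intro b hb
    obtain ⟨i, _, hbi⟩ := Multiset.mem_sum.1 hb
    obtain ⟨v, hv, rfl⟩ := Multiset.mem_map.1 hbi
    exact ⟨i, v, hv, rfl⟩
  refine ⟨?_, ?_, ?_, ?_⟩
  · intro b hb p
    obtain ⟨i, v, hv, rfl⟩ := hmem b hb
    rcases p with ⟨j, x⟩
    by_cases hj : j = i
    · subst hj; rw [cpExt_mk]; exact (hF j).1 v hv x
    · rw [cpExt_ne _ _ _ hj]
  · intro b hb hb0
    obtain ⟨i, v, hv, rfl⟩ := hmem b hb
    apply (hF i).2.1 v hv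
    funext x
    have := congrFun hb0 ⟨i, x⟩
    rwa [cpExt_mk] at this
  · refine multiset_pairwise_finsetSum _ _ ?_ ?_
    · intro i _
      exact multiset_pairwise_map_of (hF i).2.2.1 (fun v _ w _ h => li_ext_of_li h)
    · intro i _ j _ hij a ha b hb
      obtain ⟨v, hv, rfl⟩ := Multiset.mem_map.1 ha
      obtain ⟨w, hw, rfl⟩ := Multiset.mem_map.1 hb
      exact li_ext_ext_ne hij ((hF i).2.1 v hv) ((hF j).2.1 w hw)
  · apply Matrix.ext
    rintro ⟨jp, x⟩ ⟨jq, y⟩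
    rw [cpPhi, cp_map_finsetSum, sum_finsetSum, Matrix.sum_apply]
    have key : ∀ i, ((((F i).map (cpExt i)).map fun b => vecMulVec b b).sum) ⟨jp, x⟩ ⟨jq, y⟩
        = ((F i).map fun v => cpExt i v ⟨jp, x⟩ * cpExt i v ⟨jq, y⟩).sum := by
      intro i
      rw [msum_apply, Multiset.map_map, Multiset.map_map]
      simp [Function.comp_def, Matrix.vecMulVec_apply]
    simp_rw [key]
    by_cases hpq : jp = jq
    · subst hpq
      rw [Matrix.blockDiagonal'_apply_eq, Finset.sum_eq_single jp]
      · have hA := congrFun (congrFun (hF jp).2.2.2 x) y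
        rw [msum_apply, Multiset.map_map] at hA
        simp only [cpExt_mk]
        simpa [Function.comp_def, Matrix.vecMulVec_apply] using hA
      · intro i _ hi
        apply Multiset.sum_eq_zero
        intro z hz
        obtain ⟨v, hv, rfl⟩ := Multiset.mem_map.1 hz
        rw [cpExt_ne i v ⟨jp, x⟩ (fun h => hi h.symm), zero_mul]
      · intro h; exact absurd (Finset.mem_univ jp) h
    · rw [Matrix.blockDiagonal'_apply_ne Ai x y hpq]
      apply Finset.sum_eq_zero
      intro i _
      apply Multiset.sum_eq_zero
      intro z hz
      obtain ⟨v, hv, rfl⟩ := Multiset.mem_map.1 hz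
      by_cases hi : jp = i
      · rw [cpExt_ne i v ⟨jq, y⟩ (fun h => hpq (hi.trans h.symm)), mul_zero]
      · rw [cpExt_ne i v ⟨jp, x⟩ hi, zero_mul]

lemma isCPRepG_cpPsi {L : Multiset ((Σ j, Fin (d j)) → ℝ)}
    (hL : IsCPRepG (Matrix.blockDiagonal' Ai) L) (i : Fin m) :
    IsCPRepG (Ai i) (cpPsi L i) := by
  refine ⟨?_, ?_, ?_, ?_⟩
  · intro v hv x
    obtain ⟨b, hb, rfl⟩ := Multiset.mem_map.1 hv
    exact hL.1 b (Multiset.mem_filter.1 hb).1 ⟨i, x⟩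
  · intro v hv
    obtain ⟨b, hb, rfl⟩ := Multiset.mem_map.1 hv
    obtain ⟨x, hx⟩ := (Multiset.mem_filter.1 hb).2
    intro h0
    exact hx (by simpa [cpRes] using congrFun h0 x)
  · refine multiset_pairwise_map_of (multiset_pairwise_filter _ hL.2.2.1) ?_
    intro b hb c hc h
    have hbL := Multiset.mem_filter.1 hb
    have hcL := Multiset.mem_filter.1 hc
    exact li_res_of_li (supported_of_P hL hbL.1 hbL.2) (supported_of_P hL hcL.1 hcL.2) h
  · apply Matrix.ext
    intro x y
    have h0 : (((L.filter fun b => ¬∃ x, b ⟨i, x⟩ ≠ 0).map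
        fun b => b ⟨i, x⟩ * b ⟨i, y⟩).sum) = 0 := by
      apply Multiset.sum_eq_zero
      intro z hz
      obtain ⟨b, hb, rfl⟩ := Multiset.mem_map.1 hz
      have hnb := (Multiset.mem_filter.1 hb).2
      push_neg at hnb
      rw [hnb x, zero_mul]
    have hA : (L.map fun b => b ⟨i, x⟩ * b ⟨i, y⟩).sum = Ai i x y := by
      have h := congrFun (congrFun hL.2.2.2 ⟨i, x⟩) ⟨i, y⟩
      rw [msum_apply, Multiset.map_map] at h
      simpa [Function.comp_def, Matrix.vecMulVec_apply, Matrix.blockDiagonal'_apply_eq] using h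
    have hsplit : (L.map fun b => b ⟨i, x⟩ * b ⟨i, y⟩).sum
        = ((L.filter fun b => ∃ x, b ⟨i, x⟩ ≠ 0).map fun b => b ⟨i, x⟩ * b ⟨i, y⟩).sum
          + ((L.filter fun b => ¬∃ x, b ⟨i, x⟩ ≠ 0).map fun b => b ⟨i, x⟩ * b ⟨i, y⟩).sum := by
      conv_lhs => rw [← Multiset.filter_add_not (fun b => ∃ x, b ⟨i, x⟩ ≠ 0) L]
      rw [Multiset.map_add, Multiset.sum_add]
    rw [msum_apply, cpPsi, Multiset.map_map, Multiset.map_map]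
    simp only [Function.comp_def, Matrix.vecMulVec_apply, cpRes]
    rw [← hA, hsplit, h0, add_zero]

lemma cpPsi_cpPhi {F : ∀ i, Multiset (Fin (d i) → ℝ)} (hF : ∀ i, IsCPRepG (Ai i) (F i)) :
    cpPsi (cpPhi F) = F := by
  funext i
  rw [cpPsi, cpPhi, filter_finsetSum]
  rw [Finset.sum_eq_single i]
  · rw [Multiset.filter_eq_self.2, Multiset.map_map]
    · refine (Multiset.map_congr rfl ?_).trans (Multiset.map_id _)
      intro v _
      exact cpRes_cpExt i v
    · intro b hb
      obtain ⟨v, hv, rfl⟩ := Multiset.mem_map.1 hb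
      obtain ⟨x, hx⟩ := Function.ne_iff.1 ((hF i).2.1 v hv)
      exact ⟨x, by rwa [cpExt_mk]⟩
  · intro j _ hj
    rw [Multiset.filter_eq_nil.2]
    intro b hb
    obtain ⟨v, hv, rfl⟩ := Multiset.mem_map.1 hb
    rintro ⟨x, hx⟩
    exact hx (cpExt_ne j v ⟨i, x⟩ (fun h => hj h.symm))
  · intro h; exact absurd (Finset.mem_univ i) h

lemma cpPhi_cpPsi {L : Multiset ((Σ j, Fin (d j)) → ℝ)}
    (hL : IsCPRepG (Matrix.blockDiagonal' Ai) L) : cpPhi (cpPsi L) = L := by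
  rw [cpPhi]
  have hterm : ∀ i, ((cpPsi L i).map (cpExt i)) = L.filter (fun b => ∃ x, b ⟨i, x⟩ ≠ 0) := by
    intro i
    rw [cpPsi, Multiset.map_map]
    refine (Multiset.map_congr rfl ?_).trans (Multiset.map_id _)
    intro b hb
    have hb' := Multiset.mem_filter.1 hb
    exact cpExt_cpRes (supported_of_P hL hb'.1 hb'.2)
  simp_rw [hterm]
  exact sum_filter_partition _ (fun b hb => existsUnique_P hL hb)

end CPAux

/-- If `A = A₁ ⊕ ⋯ ⊕ A_m` and each `A_i` has exactly `k i` CP factorizations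
(finitely many), then `A` has exactly `∏ i, k i` CP factorizations. -/
theorem stmt_0 (m : ℕ) (d : Fin m → ℕ) (Ai : ∀ i, Matrix (Fin (d i)) (Fin (d i)) ℝ)
    (A : Matrix (Σ i, Fin (d i)) (Σ i, Fin (d i)) ℝ)
    (hA : A = Matrix.blockDiagonal' Ai)
    (hCP : ∃ L, IsCPRepG A L)
    (k : Fin m → ℕ)
    (hfin : ∀ i, {L | IsCPRepG (Ai i) L}.Finite)
    (hk : ∀ i, {L | IsCPRepG (Ai i) L}.ncard = k i) :
    {L | IsCPRepG A L}.ncard = ∏ i, k i := by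
  classical
  subst hA
  have hbij : Set.BijOn cpPhi (Set.univ.pi fun i => {L | IsCPRepG (Ai i) L})
      {L | IsCPRepG (Matrix.blockDiagonal' Ai) L} := by
    refine Set.InvOn.bijOn (f' := cpPsi) ⟨?_, ?_⟩ ?_ ?_
    · intro F hF
      exact cpPsi_cpPhi (fun i => hF i (Set.mem_univ i))
    · intro L hL
      exact cpPhi_cpPsi hL
    · intro F hF
      exact isCPRepG_cpPhi (fun i => hF i (Set.mem_univ i))
    · intro L hL i _
      exact isCPRepG_cpPsi hL i
  rw [← hbij.image_eq, Set.ncard_image_of_injOn hbij.injOn]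
  rw [← Nat.card_coe_set_eq, Nat.card_congr (Equiv.Set.univPi _), Nat.card_pi]
  exact Finset.prod_congr rfl fun i _ => by rw [Nat.card_coe_set_eq, hk i]
end

section
/- Let b₁, b₂ ∈ ℝⁿ₊ be linearly independent nonnegative vectors with supp(b₁) ⊇ supp(b₂). Then the matrix A = b₁b₁^T + b₂b₂^T has infinitely many CP representations as a sum of two rank-one matrices c₁c₁^T + c₂c₂^T with c₁, c₂ ≥ 0. -/
open Matrix

/-- If `b₁, b₂ ≥ 0` are linearly independent with `supp b₁ ⊇ supp b₂`, then
`A = b₁b₁ᵀ + b₂b₂ᵀ` has infinitely many CP representations with two rank-one summands. -/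
theorem stmt_2 (n : ℕ) (b₁ b₂ : Fin n → ℝ)
    (h₁ : ∀ i, 0 ≤ b₁ i) (h₂ : ∀ i, 0 ≤ b₂ i)
    (hli : LinearIndependent ℝ ![b₁, b₂])
    (hsupp : ∀ i, b₂ i ≠ 0 → b₁ i ≠ 0) :
    {L : Multiset (Fin n → ℝ) |
      IsCPRep (vecMulVec b₁ b₁ + vecMulVec b₂ b₂) L ∧ Multiset.card L = 2}.Infinite := by
  have hcoef : ∀ a c : ℝ, a • b₁ + c • b₂ = 0 → a = 0 ∧ c = 0 :=
    LinearIndependent.pair_iff.mp hli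
  have hb2 : b₂ ≠ 0 := by
    intro h
    exact one_ne_zero ((hcoef 0 1 (by simp [h])).2)
  obtain ⟨i₀, hi₀⟩ : ∃ i, b₂ i ≠ 0 := by
    by_contra h; push_neg at h; exact hb2 (funext fun i => h i)
  set S : Finset (Fin n) := Finset.univ.filter (fun i => b₂ i ≠ 0) with hSdef
  have hSne : S.Nonempty := ⟨i₀, by simp [hSdef, hi₀]⟩
  set r : ℝ := S.inf' hSne (fun i => b₁ i / b₂ i) with hrdef
  have hrpos : 0 < r := by
    rw [hrdef, Finset.lt_inf'_iff]
    intro i hi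
    have hb2i : b₂ i ≠ 0 := by simpa [hSdef] using hi
    have hb2ipos : 0 < b₂ i := (h₂ i).lt_of_ne (Ne.symm hb2i)
    have hb1ipos : 0 < b₁ i := (h₁ i).lt_of_ne (Ne.symm (hsupp i hb2i))
    positivity
  set δ : ℝ := min 1 (r / 2) with hδdef
  have hδpos : 0 < δ := lt_min one_pos (by linarith)
  -- basic facts about t ∈ Ioo 0 δ
  have hfacts : ∀ t ∈ Set.Ioo (0:ℝ) δ,
      0 < Real.sin t ∧ Real.sin t < t ∧ 1/2 < Real.cos t ∧ t < r / 2 ∧ t < 1 := by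
    intro t ht
    obtain ⟨ht0, htδ⟩ := ht
    have ht1 : t < 1 := lt_of_lt_of_le htδ (min_le_left _ _)
    have htr : t < r / 2 := lt_of_lt_of_le htδ (min_le_right _ _)
    have hsinpos : 0 < Real.sin t :=
      Real.sin_pos_of_pos_of_lt_pi ht0 (by linarith [Real.pi_gt_three])
    have hsinlt : Real.sin t < t := Real.sin_lt ht0
    have hcos : 1/2 < Real.cos t := by
      have := Real.one_sub_sq_div_two_lt_cos (x := t) (by positivity)
      nlinarith
    exact ⟨hsinpos, hsinlt, hcos, htr, ht1⟩
  -- the family of representations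
  set v : ℝ → (Fin n → ℝ) := fun θ => Real.cos θ • b₁ - Real.sin θ • b₂ with hvdef
  set w : ℝ → (Fin n → ℝ) := fun θ => Real.sin θ • b₁ + Real.cos θ • b₂ with hwdef
  haveI : Infinite (Set.Ioo (0:ℝ) δ) := Set.Ioo.infinite hδpos
  apply Set.infinite_of_injective_forall_mem
    (f := fun t : Set.Ioo (0:ℝ) δ => ({v t.1, w t.1} : Multiset (Fin n → ℝ)))
  · -- injectivity
    rintro ⟨t, ht⟩ ⟨s, hs⟩ hts
    simp only [Subtype.mk.injEq]
    obtain ⟨hst, hslt, hscos, -, ht1⟩ := hfacts t ht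
    obtain ⟨hss, -, hscos', -, hs1⟩ := hfacts s hs
    have hts' : ({v t, w t} : Multiset (Fin n → ℝ)) = {v s, w s} := hts
    have hmem : v t ∈ ({v s, w s} : Multiset (Fin n → ℝ)) := by
      rw [← hts']; simp
    simp only [Multiset.insert_eq_cons, Multiset.mem_cons, Multiset.mem_singleton] at hmem
    rcases hmem with hvv | hvw
    · have key : (Real.cos t - Real.cos s) • b₁ + (Real.sin s - Real.sin t) • b₂ = 0 := by
        funext i
        have hi := congrFun hvv i
        simp only [hvdef, Pi.sub_apply, Pi.smul_apply, smul_eq_mul, Pi.add_apply,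
          Pi.zero_apply] at hi ⊢
        linarith
      have hc := (hcoef _ _ key).1
      have hcc : Real.cos t = Real.cos s := by linarith
      exact Real.injOn_cos ⟨le_of_lt ht.1, by linarith [Real.pi_gt_three]⟩
        ⟨le_of_lt hs.1, by linarith [Real.pi_gt_three]⟩ hcc
    · exfalso
      have key : (Real.cos t - Real.sin s) • b₁ + (-Real.sin t - Real.cos s) • b₂ = 0 := by
        funext i
        have hi := congrFun hvw i
        simp only [hvdef, hwdef, Pi.sub_apply, Pi.smul_apply, smul_eq_mul, Pi.add_apply,
          Pi.zero_apply, Pi.neg_apply] at hi ⊢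
        linarith
      have hc := (hcoef _ _ key).2
      nlinarith
  · -- membership
    rintro ⟨t, ht⟩
    obtain ⟨hst, hslt, hscos, htr, ht1⟩ := hfacts t ht
    have hcospos : 0 < Real.cos t := by linarith
    have hvnn : ∀ i, 0 ≤ v t i := by
      intro i
      simp only [hvdef, Pi.sub_apply, Pi.smul_apply, smul_eq_mul]
      by_cases hb : b₂ i = 0
      · rw [hb]; nlinarith [h₁ i]
      · have hb2ipos : 0 < b₂ i := (h₂ i).lt_of_ne (Ne.symm hb)
        have hiS : i ∈ S := by simp [hSdef, hb]
        have hle : r ≤ b₁ i / b₂ i := Finset.inf'_le _ hiS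
        have hle' : r * b₂ i ≤ b₁ i := by
          rw [le_div_iff₀ hb2ipos] at hle; linarith
        nlinarith [mul_lt_mul_of_pos_right hslt hb2ipos, mul_lt_mul_of_pos_right htr hb2ipos,
          mul_le_mul_of_nonneg_left hle' (le_of_lt hcospos),
          mul_lt_mul_of_pos_right hscos (mul_pos hrpos hb2ipos)]
    have hwnn : ∀ i, 0 ≤ w t i := by
      intro i
      simp only [hwdef, Pi.add_apply, Pi.smul_apply, smul_eq_mul]
      have := h₁ i; have := h₂ i; positivity
    have hsq := Real.sin_sq_add_cos_sq t
    have hlivw : LinearIndependent ℝ ![v t, w t] := by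
      rw [LinearIndependent.pair_iff]
      intro a c hac
      have key : (a * Real.cos t + c * Real.sin t) • b₁ +
          (-(a * Real.sin t) + c * Real.cos t) • b₂ = 0 := by
        funext i
        have hi := congrFun hac i
        simp only [hvdef, hwdef, Pi.sub_apply, Pi.smul_apply, smul_eq_mul, Pi.add_apply,
          Pi.zero_apply] at hi ⊢
        linarith
      obtain ⟨e1, e2⟩ := hcoef _ _ key
      constructor
      · linear_combination Real.cos t * e1 - Real.sin t * e2 - a * hsq
      · linear_combination Real.sin t * e1 + Real.cos t * e2 - c * hsq
    have hvne : v t ≠ 0 := fun h => hlivw.ne_zero 0 (by simpa using h)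
    have hwne : w t ≠ 0 := fun h => hlivw.ne_zero 1 (by simpa using h)
    refine ⟨⟨?_, ?_, ?_, ?_⟩, rfl⟩
    · intro b hb
      simp only [Multiset.insert_eq_cons, Multiset.mem_cons, Multiset.mem_singleton] at hb
      rcases hb with hb | hb <;> subst hb
      · exact hvnn
      · exact hwnn
    · intro b hb
      simp only [Multiset.insert_eq_cons, Multiset.mem_cons, Multiset.mem_singleton] at hb
      rcases hb with hb | hb <;> subst hb
      · exact hvne
      · exact hwne
    · exact ⟨[v t, w t], rfl, by simp [hlivw]⟩
    · ext i j
      simp only [Multiset.insert_eq_cons, Multiset.map_cons, Multiset.map_singleton,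
        Multiset.sum_cons, Multiset.sum_singleton, Matrix.add_apply, vecMulVec_apply,
        hvdef, hwdef, Pi.sub_apply, Pi.add_apply, Pi.smul_apply, smul_eq_mul]
      linear_combination (b₁ i * b₁ j + b₂ i * b₂ j) * hsq
end

section
/- Every matrix in the interior of the cone CP_n of n×n completely positive matrices, with n ≥ 2, has infinitely many CP factorizations. -/
open Matrix

lemma li_pair_symm {n : ℕ} {b c : Fin n → ℝ} (h : LinearIndependent ℝ ![b, c]) :
    LinearIndependent ℝ ![c, b] := by
  rw [linearIndependent_fin2] at h ⊢
  simp only [Matrix.cons_val_one, Matrix.head_cons, Matrix.cons_val_zero] at h ⊢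
  obtain ⟨hc, hf⟩ := h
  have hb : b ≠ 0 := by
    intro hb0
    exact hf 0 (by simp [hb0])
  refine ⟨hb, fun a ha => ?_⟩
  have ha0 : a ≠ 0 := by rintro rfl; simp at ha; exact hc ha.symm
  exact hf a⁻¹ (by rw [← ha, smul_smul, inv_mul_cancel₀ ha0, one_smul])

lemma li_pair_smul_left {n : ℕ} {b c : Fin n → ℝ} (h : LinearIndependent ℝ ![b, c])
    {k : ℝ} (hk : k ≠ 0) : LinearIndependent ℝ ![k • b, c] := by
  rw [linearIndependent_fin2] at h ⊢
  simp only [Matrix.cons_val_one, Matrix.head_cons, Matrix.cons_val_zero] at h ⊢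
  refine ⟨h.1, fun a ha => ?_⟩
  apply h.2 (k⁻¹ * a)
  rw [mul_smul, ha, smul_smul, inv_mul_cancel₀ hk, one_smul]

lemma not_li_pair {n : ℕ} {b c : Fin n → ℝ} (hb : b ≠ 0) (hc : c ≠ 0)
    (h : ¬ LinearIndependent ℝ ![b, c]) : ∃ a : ℝ, a ≠ 0 ∧ b = a • c := by
  rw [linearIndependent_fin2] at h
  simp only [Matrix.cons_val_one, Matrix.head_cons, Matrix.cons_val_zero] at h
  push_neg at h
  obtain ⟨a, ha⟩ := h hc
  refine ⟨a, ?_, ha.symm⟩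
  rintro rfl; rw [← ha] at hb; simp at hb

lemma vecMulVec_smul_self {n : ℕ} (k : ℝ) (v : Fin n → ℝ) :
    vecMulVec (k • v) (k • v) = (k * k) • vecMulVec v v := by
  ext i j
  simp [vecMulVec_apply, Matrix.smul_apply]
  ring

lemma cp_rep_add {n : ℕ} (X : Matrix (Fin n) (Fin n) ℝ) (L : Multiset (Fin n → ℝ))
    (hL : IsCPRep X L) (v : Fin n → ℝ) (hv0 : ∀ i, 0 ≤ v i) (hvne : v ≠ 0) :
    ∃ M, IsCPRep (X + vecMulVec v v) M ∧ ∃ c : ℝ, 0 < c ∧ c • v ∈ M := by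
  obtain ⟨hLpos, hLne, hLpair, hLsum⟩ := hL
  obtain ⟨l, rfl, hlp⟩ := hLpair
  by_cases hdep : ∃ b ∈ l, ¬ LinearIndependent ℝ ![b, v]
  · obtain ⟨b, hbl, hbd⟩ := hdep
    have hbL : b ∈ (↑l : Multiset (Fin n → ℝ)) := by exact_mod_cast hbl
    obtain ⟨a, ha0, hba⟩ := not_li_pair (hLne b hbL) hvne hbd
    -- a > 0
    have hapos : 0 < a := by
      obtain ⟨i, hi⟩ : ∃ i, v i ≠ 0 := Function.ne_iff.mp hvne
      have hvi : 0 < v i := lt_of_le_of_ne (hv0 i) (Ne.symm hi)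
      have hbi : 0 ≤ b i := hLpos b hbL i
      rw [hba] at hbi
      simp only [Pi.smul_apply, smul_eq_mul] at hbi
      rcases lt_trichotomy a 0 with h|h|h
      · nlinarith
      · exact absurd h ha0
      · exact h
    set k : ℝ := Real.sqrt (a * a + 1) with hk
    have hkpos : 0 < k := Real.sqrt_pos.mpr (by nlinarith)
    have hksq : k * k = a * a + 1 := Real.mul_self_sqrt (by nlinarith)
    set u : Fin n → ℝ := k • v with hu
    set l' : List (Fin n → ℝ) := l.erase b with hl'
    have hperm : l.Perm (b :: l') := List.perm_cons_erase hbl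
    have hsymm : ∀ {x y : Fin n → ℝ}, LinearIndependent ℝ ![x, y] → LinearIndependent ℝ ![y, x] :=
      fun h => li_pair_symm h
    have hpl' : List.Pairwise (fun b c => LinearIndependent ℝ ![b, c]) (b :: l') :=
      (List.Perm.pairwise_iff hsymm hperm).mp hlp
    have hmem' : ∀ x ∈ l', x ∈ l := fun x hx => List.erase_subset hx
    have hcoe : (↑l : Multiset (Fin n → ℝ)) = ↑(b :: l') := Multiset.coe_eq_coe.mpr hperm
    have hub : u = (k * a⁻¹) • b := by
      rw [hba, smul_smul, mul_assoc, inv_mul_cancel₀ (ne_of_gt hapos), mul_one]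
    refine ⟨↑(u :: l'), ⟨?_, ?_, ?_, ?_⟩, k, hkpos, ?_⟩
    · intro x hx i
      rcases List.mem_cons.mp (Multiset.mem_coe.mp hx) with rfl|h
      · exact mul_nonneg hkpos.le (hv0 i)
      · exact hLpos x (Multiset.mem_coe.mpr (hmem' x h)) i
    · intro x hx
      rcases List.mem_cons.mp (Multiset.mem_coe.mp hx) with rfl|h
      · exact smul_ne_zero (ne_of_gt hkpos) hvne
      · exact hLne x (Multiset.mem_coe.mpr (hmem' x h))
    · refine ⟨u :: l', rfl, List.pairwise_cons.mpr ⟨fun c hc => ?_, (List.pairwise_cons.mp hpl').2⟩⟩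
      rw [hub]
      exact li_pair_smul_left ((List.pairwise_cons.mp hpl').1 c hc)
        (mul_ne_zero (ne_of_gt hkpos) (inv_ne_zero (ne_of_gt hapos)))
    · rw [hcoe] at hLsum
      rw [← Multiset.cons_coe, Multiset.map_cons, Multiset.sum_cons]
      rw [← Multiset.cons_coe, Multiset.map_cons, Multiset.sum_cons] at hLsum
      have h1 : vecMulVec u u = vecMulVec b b + vecMulVec v v := by
        rw [hu, vecMulVec_smul_self, hksq, hba, vecMulVec_smul_self]
        ext i j
        simp [Matrix.add_apply, Matrix.smul_apply]
        ring
      rw [h1, ← hLsum]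
      abel
    · exact Multiset.mem_coe.mpr List.mem_cons_self
  · push_neg at hdep
    refine ⟨↑(v :: l), ⟨?_, ?_, ?_, ?_⟩, 1, one_pos, ?_⟩
    · intro x hx i
      rcases List.mem_cons.mp (Multiset.mem_coe.mp hx) with rfl|h
      · exact hv0 i
      · exact hLpos x (Multiset.mem_coe.mpr h) i
    · intro x hx
      rcases List.mem_cons.mp (Multiset.mem_coe.mp hx) with rfl|h
      · exact hvne
      · exact hLne x (Multiset.mem_coe.mpr h)
    · exact ⟨v :: l, rfl, List.pairwise_cons.mpr ⟨fun c hc => li_pair_symm (hdep c hc), hlp⟩⟩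
    · rw [← Multiset.cons_coe, Multiset.map_cons, Multiset.sum_cons, hLsum, add_comm]
    · rw [one_smul]
      exact Multiset.mem_coe.mpr List.mem_cons_self

/-- Every matrix in the interior of `CP_n` (taken inside the space of symmetric
matrices, with the entrywise sup metric) has infinitely many CP factorizations. -/
theorem stmt_3 (n : ℕ) (hn : 2 ≤ n) (A : Matrix (Fin n) (Fin n) ℝ) (hAs : A.IsSymm)
    (hint : ∃ ε > (0 : ℝ), ∀ X : Matrix (Fin n) (Fin n) ℝ,
      X.IsSymm → (∀ i j, |X i j - A i j| < ε) → IsCP X) :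
    {L | IsCPRep A L}.Infinite := by
  simp only [IsCP] at hint
  obtain ⟨ε, hε, hcp⟩ := hint
  set t : ℝ := ε / 2 with ht
  have htpos : 0 < t := by positivity
  set i0 : Fin n := ⟨0, by omega⟩ with hi0
  set i1 : Fin n := ⟨1, by omega⟩ with hi1
  have hi01 : i0 ≠ i1 := by simp [hi0, hi1, Fin.ext_iff]
  set v : ℝ → (Fin n → ℝ) := fun s i => if i = i0 then 1 else if i = i1 then s else 0 with hv
  have hv0 : ∀ s ∈ Set.Icc (0:ℝ) 1, ∀ i, 0 ≤ v s i := by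
    intro s hs i
    simp only [hv]
    split_ifs
    · norm_num
    · exact hs.1
    · exact le_refl 0
  have hvb : ∀ s ∈ Set.Icc (0:ℝ) 1, ∀ i, |v s i| ≤ 1 := by
    intro s hs i
    simp only [hv]
    split_ifs
    · norm_num
    · rw [abs_of_nonneg hs.1]; exact hs.2
    · norm_num
  have hvne : ∀ s : ℝ, v s ≠ 0 := by
    intro s h
    have := congrFun h i0
    simp [hv] at this
  have hvi0 : ∀ s : ℝ, v s i0 = 1 := by intro s; simp [hv]
  have hvi1 : ∀ s : ℝ, v s i1 = s := by intro s; simp [hv, hi01.symm]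
  have key : ∀ s : ℝ, ∃ (M : Multiset (Fin n → ℝ)) (c : ℝ),
      s ∈ Set.Icc (0:ℝ) 1 → IsCPRep A M ∧ 0 < c ∧ c • v s ∈ M := by
    intro s
    by_cases hs : s ∈ Set.Icc (0:ℝ) 1
    · set X : Matrix (Fin n) (Fin n) ℝ := A - t • vecMulVec (v s) (v s) with hX
      have hXsymm : X.IsSymm := by
        rw [Matrix.IsSymm]
        ext i j
        simp only [hX, Matrix.transpose_apply, Matrix.sub_apply, Matrix.smul_apply,
          vecMulVec_apply, smul_eq_mul]
        rw [hAs.apply i j]  -- check direction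
        ring
      have hXclose : ∀ i j, |X i j - A i j| < ε := by
        intro i j
        have h1 : X i j - A i j = -(t * (v s i * v s j)) := by
          simp only [hX, Matrix.sub_apply, Matrix.smul_apply, vecMulVec_apply, smul_eq_mul]
          ring
        rw [h1, abs_neg, abs_mul, abs_mul, abs_of_pos htpos]
        have := hvb s hs i
        have := hvb s hs j
        have h2 : |v s i| * |v s j| ≤ 1 := by
          nlinarith [abs_nonneg (v s i), abs_nonneg (v s j)]
        nlinarith
      obtain ⟨L, hL⟩ := hcp X hXsymm hXclose
      set w : Fin n → ℝ := Real.sqrt t • v s with hw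
      have hw0 : ∀ i, 0 ≤ w i := fun i =>
        mul_nonneg (Real.sqrt_nonneg t) (hv0 s hs i)
      have hwne : w ≠ 0 := smul_ne_zero (ne_of_gt (Real.sqrt_pos.mpr htpos)) (hvne s)
      obtain ⟨M, hM, c, hc, hcw⟩ := cp_rep_add X L hL w hw0 hwne
      have hXA : X + vecMulVec w w = A := by
        rw [hw, vecMulVec_smul_self, Real.mul_self_sqrt htpos.le, hX]
        abel
      rw [hXA] at hM
      refine ⟨M, c * Real.sqrt t, fun _ => ⟨hM, ?_, ?_⟩⟩
      · exact mul_pos hc (Real.sqrt_pos.mpr htpos)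
      · rwa [mul_smul]
    · exact ⟨0, 0, fun h => absurd h hs⟩
  choose M c hMc using key
  by_contra hfin
  rw [Set.not_infinite] at hfin
  have hB : (⋃ L ∈ {L | IsCPRep A L}, {x | x ∈ L}).Finite :=
    hfin.biUnion (fun L _ => L.finite_toSet)
  set φ : ℝ → (Fin n → ℝ) := fun s => c s • v s with hφ
  have hinj : Set.InjOn φ (Set.Icc (0:ℝ) 1) := by
    intro s hs s' hs' h
    obtain ⟨_, hcs, _⟩ := hMc s hs
    obtain ⟨_, hcs', _⟩ := hMc s' hs'
    have h0 := congrFun h i0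
    have h1 := congrFun h i1
    simp only [hφ, Pi.smul_apply, smul_eq_mul] at h0 h1
    rw [hvi0, hvi0] at h0
    rw [hvi1, hvi1] at h1
    simp only [mul_one] at h0
    rw [h0] at h1
    exact mul_left_cancel₀ (ne_of_gt hcs') h1
  have hsub : φ '' Set.Icc (0:ℝ) 1 ⊆ ⋃ L ∈ {L | IsCPRep A L}, {x | x ∈ L} := by
    rintro x ⟨s, hs, rfl⟩
    obtain ⟨hMs, _, hmem⟩ := hMc s hs
    exact Set.mem_biUnion hMs hmem
  exact ((Set.Icc_infinite (by norm_num : (0:ℝ) < 1)).image hinj) (hB.subset hsub)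
end

section
/- Let A be an n×n irreducible completely positive matrix whose graph is exactly the n-cycle, n ≥ 4. Then A has at most two minimal CP factorizations. -/
open Matrix

open Fin.NatCast Fin.CommRing

namespace CPcycle

section prelim
variable {α : Type*}

lemma msum_apply {n : ℕ} (s : Multiset (Matrix (Fin n) (Fin n) ℝ)) (i j : Fin n) :
    s.sum i j = (s.map fun M => M i j).sum := by
  induction s using Multiset.induction with
  | empty => simp
  | cons a s ih => simp [Multiset.sum_cons, Matrix.add_apply, ih]

lemma sum_map_le_of_le (s t : Multiset α) (f : α → ℝ) (h : s ≤ t)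
    (hf : ∀ x ∈ t, 0 ≤ f x) : (s.map f).sum ≤ (t.map f).sum := by
  obtain ⟨u, rfl⟩ := Multiset.le_iff_exists_add.mp h
  simp only [Multiset.map_add, Multiset.sum_add, le_add_iff_nonneg_right]
  exact Multiset.sum_nonneg (fun x hx => by
    obtain ⟨y, hy, rfl⟩ := Multiset.mem_map.mp hx
    exact hf y (by simp [hy]))

lemma filter_two_le [DecidableEq α] (s : Multiset α) (P R : α → Prop) [DecidablePred P] [DecidablePred R]
    (hPR : ∀ x ∈ s, ¬(P x ∧ R x)) (f : α → ℝ) (hf : ∀ x ∈ s, 0 ≤ f x) :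
    ((s.filter P).map f).sum + ((s.filter R).map f).sum ≤ (s.map f).sum := by
  have hle : s.filter P + s.filter R ≤ s := by
    rw [Multiset.le_iff_count]
    intro x
    rw [Multiset.count_add, Multiset.count_filter, Multiset.count_filter]
    by_cases hP : P x
    · by_cases hR : R x
      · by_cases hxs : x ∈ s
        · exact absurd ⟨hP, hR⟩ (hPR x hxs)
        · simp [Multiset.count_eq_zero_of_notMem hxs, hP, hR]
      · simp [hP, hR]
    · by_cases hR : R x <;> simp [hP, hR]
  calc ((s.filter P).map f).sum + ((s.filter R).map f).sum
      = (((s.filter P) + (s.filter R)).map f).sum := by rw [Multiset.map_add, Multiset.sum_add]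
    _ ≤ (s.map f).sum := sum_map_le_of_le _ _ f hle hf

lemma ms_cauchy_schwarz (s : Multiset α) (f g : α → ℝ) (hf : ∀ x ∈ s, 0 ≤ f x)
    (hg : ∀ x ∈ s, 0 ≤ g x) :
    (s.map fun x => f x * g x).sum ^ 2 ≤ (s.map fun x => f x ^ 2).sum * (s.map fun x => g x ^ 2).sum := by
  induction s using Multiset.induction with
  | empty => simp
  | cons a s ih =>
    have hf' : ∀ x ∈ s, 0 ≤ f x := fun x hx => hf x (by simp [hx])
    have hg' : ∀ x ∈ s, 0 ≤ g x := fun x hx => hg x (by simp [hx])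
    have IH := ih hf' hg'
    set S := (s.map fun x => f x * g x).sum with hS
    set P := (s.map fun x => f x ^ 2).sum with hP
    set Q := (s.map fun x => g x ^ 2).sum with hQ
    have hSnn : 0 ≤ S := Multiset.sum_nonneg (fun x hx => by
      obtain ⟨y, hy, rfl⟩ := Multiset.mem_map.mp hx
      exact mul_nonneg (hf' y hy) (hg' y hy))
    have hPnn : 0 ≤ P := Multiset.sum_nonneg (fun x hx => by
      obtain ⟨y, hy, rfl⟩ := Multiset.mem_map.mp hx; positivity)
    have hQnn : 0 ≤ Q := Multiset.sum_nonneg (fun x hx => by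
      obtain ⟨y, hy, rfl⟩ := Multiset.mem_map.mp hx; positivity)
    simp only [Multiset.map_cons, Multiset.sum_cons, ← hS, ← hP, ← hQ]
    have hfa : 0 ≤ f a := hf a (by simp)
    have hga : 0 ≤ g a := hg a (by simp)
    have hp : Real.sqrt P ^ 2 = P := Real.sq_sqrt hPnn
    have hq : Real.sqrt Q ^ 2 = Q := Real.sq_sqrt hQnn
    have hpq : S ≤ Real.sqrt P * Real.sqrt Q := by
      have h1 : S = Real.sqrt (S ^ 2) := (Real.sqrt_sq hSnn).symm
      have h2 : Real.sqrt (S ^ 2) ≤ Real.sqrt (P * Q) := Real.sqrt_le_sqrt IH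
      rw [h1, ← Real.sqrt_mul hPnn]
      exact h2
    nlinarith [sq_nonneg (f a * Real.sqrt Q - g a * Real.sqrt P), Real.sqrt_nonneg P,
      Real.sqrt_nonneg Q, mul_nonneg hfa hga]

lemma li_pair {n : ℕ} (u v : Fin n → ℝ) (m : Fin n) (hu : u m ≠ 0) (hv : v m = 0)
    (hv' : v ≠ 0) : LinearIndependent ℝ ![u, v] := by
  rw [linearIndependent_fin2]
  refine ⟨by simpa using hv', fun a hav => ?_⟩
  have := congrFun hav m
  simp only [Matrix.cons_val_one, Matrix.head_cons, Pi.smul_apply, Matrix.cons_val_zero, hv,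
    smul_eq_mul, mul_zero] at this
  exact hu this.symm
end prelim



/-- Orbit of the cycle recursion. -/
noncomputable def tau (a c : ℕ → ℝ) (x : ℝ) : ℕ → ℝ
  | 0 => x
  | (k+1) => a (k+1) - c k / tau a c x k

@[simp] lemma tau_zero (a c : ℕ → ℝ) (x : ℝ) : tau a c x 0 = x := rfl
lemma tau_succ (a c : ℕ → ℝ) (x : ℝ) (k : ℕ) :
    tau a c x (k+1) = a (k+1) - c k / tau a c x k := rfl

/-- Comparison with a subsolution. -/
lemma tau_ge_sub (a c : ℕ → ℝ) (t : ℕ → ℝ) (m : ℕ)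
    (hc : ∀ k, k < m → 0 ≤ c k)
    (ht : ∀ k, k ≤ m → 0 < t k)
    (hsub : ∀ k, k < m → t (k+1) ≤ a (k+1) - c k / t k)
    (x : ℝ) (hx : t 0 ≤ x) :
    ∀ k, k ≤ m → t k ≤ tau a c x k := by
  intro k
  induction k with
  | zero => intro _; simpa using hx
  | succ k ih =>
    intro hk
    have hk' : k ≤ m := Nat.le_of_succ_le hk
    have hkm : k < m := hk
    have h1 : t k ≤ tau a c x k := ih hk'
    have h2 : 0 < t k := ht k hk'
    have h3 : c k / tau a c x k ≤ c k / t k :=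
      div_le_div_of_nonneg_left (hc k hkm) h2 h1 |>.trans_eq rfl
    calc t (k+1) ≤ a (k+1) - c k / t k := hsub k hkm
      _ ≤ a (k+1) - c k / tau a c x k := by linarith
      _ = tau a c x (k+1) := (tau_succ a c x k).symm

lemma tau_continuousOn (a c : ℕ → ℝ) (t : ℕ → ℝ) (m : ℕ) (y : ℝ) (hy : t 0 ≤ y)
    (hc : ∀ k, k < m → 0 ≤ c k)
    (ht : ∀ k, k ≤ m → 0 < t k)
    (hsub : ∀ k, k < m → t (k+1) ≤ a (k+1) - c k / t k) :
    ∀ k, k ≤ m → ContinuousOn (fun x => tau a c x k) (Set.Ici y) := by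
  intro k
  induction k with
  | zero => intro _; exact continuousOn_id
  | succ k ih =>
    intro hk
    have hk' : k ≤ m := Nat.le_of_succ_le hk
    have hne : ∀ x ∈ Set.Ici y, tau a c x k ≠ 0 := by
      intro x hx
      have h1 := tau_ge_sub a c t m hc ht hsub x (le_trans hy hx) k hk'
      exact ne_of_gt (lt_of_lt_of_le (ht k hk') h1)
    have : ContinuousOn (fun x => a (k+1) - c k / tau a c x k) (Set.Ici y) :=
      continuousOn_const.sub ((continuousOn_const.div (ih hk') hne))
    simpa [tau_succ] using this

/-- Existence of an exact closed positive orbit from a subsolution, by IVT. -/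
lemma exists_root (n : ℕ) (hn : 1 ≤ n) (a c : ℕ → ℝ) (t : ℕ → ℝ)
    (hc : ∀ k, k < n → 0 < c k)
    (ht : ∀ k, k ≤ n → 0 < t k)
    (htn : t n = t 0)
    (hsub : ∀ k, k < n → t (k+1) ≤ a (k+1) - c k / t k) :
    ∃ x, t 0 ≤ x ∧ (∀ k, k ≤ n → 0 < tau a c x k) ∧ tau a c x n = x := by
  have hc' : ∀ k, k < n → 0 ≤ c k := fun k hk => (hc k hk).le
  set M := max (t 0) (a n) + 1 with hM
  have hM1 : t 0 ≤ M := by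
    have := le_max_left (t 0) (a n); linarith
  have hconts : ContinuousOn (fun x => tau a c x n - x) (Set.Icc (t 0) M) := by
    apply ContinuousOn.sub
    · exact (tau_continuousOn a c t n (t 0) le_rfl hc' ht hsub n le_rfl).mono
        (fun x hx => hx.1)
    · exact continuousOn_id
  have hlow : 0 ≤ tau a c (t 0) n - t 0 := by
    have := tau_ge_sub a c t n hc' ht hsub (t 0) le_rfl n le_rfl
    rw [htn] at this; linarith
  have hpos : ∀ x, t 0 ≤ x → 0 < tau a c x (n-1) := fun x hx =>
    lt_of_lt_of_le (ht _ (Nat.sub_le n 1)) (tau_ge_sub a c t n hc' ht hsub x hx _ (Nat.sub_le n 1))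
  have hhigh : tau a c M n - M < 0 := by
    have hn1 : n - 1 + 1 = n := Nat.succ_pred_eq_of_pos hn
    have h1 : tau a c M n = a n - c (n-1) / tau a c M (n-1) := by
      conv_lhs => rw [← hn1, tau_succ, hn1]
    have h2 : 0 < c (n-1) / tau a c M (n-1) :=
      div_pos (hc _ (by omega)) (hpos M hM1)
    have h3 : a n ≤ max (t 0) (a n) := le_max_right _ _
    rw [h1]; simp only [hM]; linarith
  have h0mem : (0:ℝ) ∈ Set.Icc (tau a c M n - M) (tau a c (t 0) n - t 0) :=
    ⟨hhigh.le, hlow⟩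
  obtain ⟨x, hxmem, hx0⟩ := intermediate_value_Icc' hM1 hconts h0mem
  refine ⟨x, hxmem.1, fun k hk => ?_, by linarith [sub_eq_zero.mp hx0, hx0]⟩
  exact lt_of_lt_of_le (ht k hk) (tau_ge_sub a c t n hc' ht hsub x hxmem.1 k hk)


noncomputable def NC (a c : ℕ → ℝ) : ℕ → (ℝ × ℝ) × (ℝ × ℝ)
  | 0 => ((1, 0), (a 1, -c 0))
  | (k+1) => ((NC a c k).2, (a (k+2) * (NC a c k).2.1 - c (k+1) * (NC a c k).1.1,
      a (k+2) * (NC a c k).2.2 - c (k+1) * (NC a c k).1.2))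

noncomputable def eN (a c : ℕ → ℝ) (k : ℕ) : ℝ := ((NC a c k).1).1
noncomputable def fN (a c : ℕ → ℝ) (k : ℕ) : ℝ := ((NC a c k).1).2

@[simp] lemma eN_zero (a c : ℕ → ℝ) : eN a c 0 = 1 := rfl
@[simp] lemma fN_zero (a c : ℕ → ℝ) : fN a c 0 = 0 := rfl
@[simp] lemma eN_one (a c : ℕ → ℝ) : eN a c 1 = a 1 := rfl
@[simp] lemma fN_one (a c : ℕ → ℝ) : fN a c 1 = -c 0 := rfl
lemma eN_succ (a c : ℕ → ℝ) (k : ℕ) :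
    eN a c (k+2) = a (k+2) * eN a c (k+1) - c (k+1) * eN a c k := by
  have h1 : eN a c (k+1) = (NC a c k).2.1 := rfl
  have h0 : eN a c k = (NC a c k).1.1 := rfl
  rw [h1, h0]; rfl
lemma fN_succ (a c : ℕ → ℝ) (k : ℕ) :
    fN a c (k+2) = a (k+2) * fN a c (k+1) - c (k+1) * fN a c k := by
  have h1 : fN a c (k+1) = (NC a c k).2.2 := rfl
  have h0 : fN a c k = (NC a c k).1.2 := rfl
  rw [h1, h0]; rfl

noncomputable def prodTau (a c : ℕ → ℝ) (x : ℝ) (k : ℕ) : ℝ :=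
  ∏ j ∈ Finset.range (k+1), tau a c x j

@[simp] lemma prodTau_zero (a c : ℕ → ℝ) (x : ℝ) : prodTau a c x 0 = x := by
  simp [prodTau]
lemma prodTau_succ (a c : ℕ → ℝ) (x : ℝ) (k : ℕ) :
    prodTau a c x (k+1) = prodTau a c x k * tau a c x (k+1) :=
  Finset.prod_range_succ _ _

lemma lin_eq (a c : ℕ → ℝ) (x : ℝ) (m : ℕ)
    (h : ∀ j, j ≤ m → tau a c x j ≠ 0) :
    ∀ k, k ≤ m → eN a c k * x + fN a c k = prodTau a c x k := by
  intro k
  induction k using Nat.twoStepInduction with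
  | zero => intro _; simp
  | one =>
    intro h1
    have hx : x ≠ 0 := h 0 (by omega)
    rw [prodTau_succ, prodTau_zero]
    simp only [eN_one, fN_one, tau_succ, tau_zero]
    field_simp
    ring
  | more k ih1 ih2 =>
    intro hk2
    have e1 := ih1 (by omega)
    have e2 := ih2 (by omega)
    have ht1 : tau a c x (k+1) ≠ 0 := h (k+1) (by omega)
    rw [eN_succ, fN_succ, prodTau_succ, tau_succ a c x (k+1)]
    rw [prodTau_succ] at e2
    have expand : prodTau a c x (k+1) * (a (k+1+1) - c (k+1) / tau a c x (k+1))
        = a (k+2) * (prodTau a c x k * tau a c x (k+1)) - c (k+1) * prodTau a c x k := by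
      rw [prodTau_succ]; field_simp
    rw [expand]
    linear_combination a (k+2) * e2 - c (k+1) * e1

noncomputable def Qf (a c : ℕ → ℝ) (m : ℕ) (x : ℝ) : ℝ :=
  (a (m+2) - x) * (eN a c (m+1) * x + fN a c (m+1))
    - c (m+1) * (eN a c m * x + fN a c m)

lemma Qf_eq_quad (a c : ℕ → ℝ) (m : ℕ) (x : ℝ) :
    Qf a c m x = (-eN a c (m+1)) * x^2
      + (a (m+2) * eN a c (m+1) - fN a c (m+1) - c (m+1) * eN a c m) * x
      + (a (m+2) * fN a c (m+1) - c (m+1) * fN a c m) := by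
  simp only [Qf]; ring

lemma Qf_root (a c : ℕ → ℝ) (m : ℕ) (x : ℝ)
    (hpos : ∀ k, k ≤ m + 1 → 0 < tau a c x k) :
    Qf a c m x = prodTau a c x (m+1) * (tau a c x (m+2) - x) := by
  have hne : ∀ j, j ≤ m + 1 → tau a c x j ≠ 0 := fun j hj => ne_of_gt (hpos j hj)
  have e1 := lin_eq a c x (m+1) hne (m+1) le_rfl
  have e2 := lin_eq a c x (m+1) hne m (by omega)
  have ht : tau a c x (m+1) ≠ 0 := hne (m+1) le_rfl
  rw [Qf, e1, e2, tau_succ a c x (m+1), prodTau_succ a c x m]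
  field_simp
  ring

lemma quad_vanish (qa qb qc x y z : ℝ) (hxy : x ≠ y) (hyz : y ≠ z) (hxz : x ≠ z)
    (hx : qa*x^2+qb*x+qc = 0) (hy : qa*y^2+qb*y+qc = 0) (hz : qa*z^2+qb*z+qc = 0) :
    qa = 0 ∧ qb = 0 ∧ qc = 0 := by
  have e1 : (x - y) * (qa*(x+y) + qb) = 0 := by linear_combination hx - hy
  have e2 : (y - z) * (qa*(y+z) + qb) = 0 := by linear_combination hy - hz
  have h1 : qa*(x+y) + qb = 0 := by
    rcases mul_eq_zero.mp e1 with h | h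
    · exact absurd (sub_eq_zero.mp h) hxy
    · exact h
  have h2 : qa*(y+z) + qb = 0 := by
    rcases mul_eq_zero.mp e2 with h | h
    · exact absurd (sub_eq_zero.mp h) hyz
    · exact h
  have e3 : qa * (x - z) = 0 := by linear_combination h1 - h2
  have hqa : qa = 0 := by
    rcases mul_eq_zero.mp e3 with h | h
    · exact h
    · exact absurd (sub_eq_zero.mp h) hxz
  have hqb : qb = 0 := by rw [hqa] at h1; linarith
  have hqc : qc = 0 := by rw [hqa, hqb] at hx; linarith
  exact ⟨hqa, hqb, hqc⟩

/-- The constant coefficient of `Qf` is negative whenever there is a closed positive orbit. -/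
lemma qC_neg (a c : ℕ → ℝ) (m : ℕ) (hm : 1 ≤ m) (x : ℝ)
    (hc : ∀ k, k < m + 2 → 0 < c k)
    (hpos : ∀ k, k ≤ m + 2 → 0 < tau a c x k)
    (hclose : tau a c x (m+2) = x) :
    a (m+2) * fN a c (m+1) - c (m+1) * fN a c m < 0 := by
  have claim : ∀ k, 1 ≤ k → k + 1 ≤ m + 1 →
      fN a c k < 0 ∧ fN a c (k+1) ≤ tau a c x (k+1) * fN a c k := by
    intro k hk1
    induction k, hk1 using Nat.le_induction with
    | base =>
      intro hk
      have hc0 : 0 < c 0 := hc 0 (by omega)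
      have hf1 : fN a c 1 < 0 := by simp [hc0]
      constructor
      · exact hf1
      · have h2 : fN a c 2 = a 2 * fN a c 1 := by
          rw [show (2:ℕ) = 0 + 2 by rfl, fN_succ]; simp
        have htau1 : 0 < tau a c x 1 := hpos 1 (by omega)
        have hdiff : tau a c x 2 = a 2 - c 1 / tau a c x 1 := tau_succ a c x 1
        have hcd : 0 < c 1 / tau a c x 1 := div_pos (hc 1 (by omega)) htau1
        rw [h2]
        nlinarith
    | succ k hk ih =>
      intro hk2
      obtain ⟨ihneg, ihle⟩ := ih (by omega)
      have htk1 : 0 < tau a c x (k+1) := hpos (k+1) (by omega)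
      have htk2 : 0 < tau a c x (k+2) := hpos (k+2) (by omega)
      have hck1 : 0 < c (k+1) := hc (k+1) (by omega)
      have hfk1 : fN a c (k+1) < 0 := by nlinarith
      refine ⟨hfk1, ?_⟩
      have hdiv : fN a c k ≥ fN a c (k+1) / tau a c x (k+1) := by
        rw [ge_iff_le, div_le_iff₀ htk1]; linarith [mul_comm (tau a c x (k+1)) (fN a c k)]
      have hrec : fN a c (k+2) = a (k+2) * fN a c (k+1) - c (k+1) * fN a c k := fN_succ a c k
      have htaueq : tau a c x (k+2) = a (k+2) - c (k+1) / tau a c x (k+1) := tau_succ a c x (k+1)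
      have : fN a c (k+2) ≤ a (k+2) * fN a c (k+1) - c (k+1) * (fN a c (k+1) / tau a c x (k+1)) := by
        rw [hrec]
        have := mul_le_mul_of_nonneg_left hdiv hck1.le
        linarith
      calc fN a c (k+2) ≤ a (k+2) * fN a c (k+1) - c (k+1) * (fN a c (k+1) / tau a c x (k+1)) := this
        _ = tau a c x (k+2) * fN a c (k+1) := by rw [htaueq]; field_simp
  obtain ⟨hfm, hfm1⟩ := claim m hm (by omega)
  have htm1 : 0 < tau a c x (m+1) := hpos (m+1) (by omega)
  have hfm1neg : fN a c (m+1) < 0 := by nlinarith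
  have hcm1 : 0 < c (m+1) := hc (m+1) (by omega)
  have hx : 0 < x := by simpa using hpos 0 (by omega)
  have hdiv : fN a c m ≥ fN a c (m+1) / tau a c x (m+1) := by
    rw [ge_iff_le, div_le_iff₀ htm1]; linarith [mul_comm (tau a c x (m+1)) (fN a c m)]
  have htaueq : tau a c x (m+2) = a (m+2) - c (m+1) / tau a c x (m+1) := tau_succ a c x (m+1)
  have key : a (m+2) * fN a c (m+1) - c (m+1) * fN a c m
      ≤ fN a c (m+1) * (a (m+2) - c (m+1) / tau a c x (m+1)) := by
    have := mul_le_mul_of_nonneg_left hdiv hcm1.le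
    have expand : fN a c (m+1) * (a (m+2) - c (m+1) / tau a c x (m+1))
        = a (m+2) * fN a c (m+1) - c (m+1) * (fN a c (m+1) / tau a c x (m+1)) := by
      field_simp
    rw [expand]; linarith
  rw [← htaueq, hclose] at key
  nlinarith


variable {n : ℕ}



section fin
variable [NeZero n] (hn : 4 ≤ n)
include hn

lemma fval1 : (1 : Fin n).val = 1 := by
  rw [Fin.val_one']; exact Nat.mod_eq_of_lt (by omega)

lemma fadd_ne (k : ℕ) (h0 : 0 < k) (hk : k < n) (x : Fin n) : x + (k : Fin n) ≠ x := by
  intro h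
  have h2 : (k : Fin n) = 0 := by
    nth_rewrite 2 [← add_zero x] at h
    exact add_left_cancel h
  have h3 : ((k : ℕ) : Fin n).val = 0 := by rw [h2]; rfl
  rw [Fin.val_natCast] at h3
  rw [Nat.mod_eq_of_lt hk] at h3
  omega

lemma fne1 (x : Fin n) : x + 1 ≠ x := by
  have := fadd_ne hn 1 (by omega) (by omega) x
  simpa using this

lemma fne2 (x : Fin n) : x + 1 + 1 ≠ x := by
  have h2 : ((2 : ℕ) : Fin n) = 1 + 1 := by push_cast; ring
  have := fadd_ne hn 2 (by omega) (by omega) x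
  rw [h2, ← add_assoc] at this
  exact this

lemma fne3 (x : Fin n) : x + 1 + 1 + 1 ≠ x := by
  have h2 : ((3 : ℕ) : Fin n) = 1 + 1 + 1 := by push_cast; ring
  have := fadd_ne hn 3 (by omega) (by omega) x
  rw [h2, ← add_assoc, ← add_assoc] at this
  exact this

lemma fsucc_val (k : Fin n) (h : k.val + 1 < n) : (k + 1).val = k.val + 1 := by
  rw [Fin.val_add, fval1 hn, Nat.mod_eq_of_lt h]

lemma fsucc_last (k : Fin n) (h : k.val + 1 = n) : k + 1 = 0 := by
  apply Fin.ext
  rw [Fin.val_add, fval1 hn, h, Nat.mod_self]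
  simp

lemma fcast_succ (k : ℕ) : ((k + 1 : ℕ) : Fin n) = (k : Fin n) + 1 := by
  push_cast
  ring

lemma fexists_pred (j : Fin n) : ∃ k : Fin n, j = k + 1 := by
  exact ⟨j - 1, (sub_add_cancel j 1).symm⟩

end fin

section adj
variable [NeZero n] (hn : 4 ≤ n) (A : Matrix (Fin n) (Fin n) ℝ)
  (hcyc : matGraph A = SimpleGraph.cycleGraph n)
include hn hcyc

lemma adj_char : ∀ u v : Fin n,
    (u ≠ v ∧ (A u v ≠ 0 ∨ A v u ≠ 0)) ↔ (u = v + 1 ∨ v = u + 1) := by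
  intro u v
  have h : (matGraph A).Adj u v ↔ (SimpleGraph.cycleGraph n).Adj u v := by rw [hcyc]
  have h2 : (SimpleGraph.cycleGraph n).Adj u v ↔ ((u - v).val = 1 ∨ (v - u).val = 1) :=
    SimpleGraph.cycleGraph_adj'
  have h3 : ((u - v).val = 1 ∨ (v - u).val = 1) ↔ (u = v + 1 ∨ v = u + 1) := by
    constructor
    · rintro (h' | h')
      · left
        have : u - v = 1 := Fin.ext (by rw [h', fval1 hn])
        rw [← this]; ring
      · right
        have : v - u = 1 := Fin.ext (by rw [h', fval1 hn])
        rw [← this]; ring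
    · rintro (rfl | rfl)
      · left; rw [show v + 1 - v = 1 by ring, fval1 hn]
      · right; rw [show u + 1 - u = 1 by ring, fval1 hn]
  exact (h.trans h2).trans h3

end adj

section rep
variable {n : ℕ} [NeZero n] {A : Matrix (Fin n) (Fin n) ℝ} {L : Multiset (Fin n → ℝ)}

lemma rep_entry (h : IsCPRep A L) (i j : Fin n) :
    A i j = (L.map fun b => b i * b j).sum := by
  rw [← h.2.2.2, msum_apply, Multiset.map_map]
  apply congrArg
  apply Multiset.map_congr rfl
  intro b _
  simp [Matrix.vecMulVec_apply, Function.comp]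

lemma rep_nonneg (h : IsCPRep A L) (i j : Fin n) : 0 ≤ A i j := by
  rw [rep_entry h]
  apply Multiset.sum_nonneg
  intro x hx
  obtain ⟨b, hb, rfl⟩ := Multiset.mem_map.mp hx
  exact mul_nonneg (h.1 b hb i) (h.1 b hb j)

lemma rep_symm (h : IsCPRep A L) (i j : Fin n) : A i j = A j i := by
  rw [rep_entry h i j, rep_entry h j i]
  apply congrArg
  apply Multiset.map_congr rfl
  intro b _
  ring

lemma rep_term_le (h : IsCPRep A L) {b : Fin n → ℝ} (hb : b ∈ L) (i j : Fin n) :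
    b i * b j ≤ A i j := by
  rw [rep_entry h]
  apply Multiset.single_le_sum
  · intro x hx
    obtain ⟨c, hc, rfl⟩ := Multiset.mem_map.mp hx
    exact mul_nonneg (h.1 c hc i) (h.1 c hc j)
  · exact Multiset.mem_map_of_mem _ hb

variable (hn : 4 ≤ n) (hcyc : matGraph A = SimpleGraph.cycleGraph n)
include hn hcyc

lemma hApos (h : IsCPRep A L) (i : Fin n) : 0 < A i (i+1) := by
  have hadj := (adj_char hn A hcyc i (i+1)).mpr (Or.inr rfl)
  have hne : A i (i+1) ≠ 0 := by
    rcases hadj.2 with h1 | h1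
    · exact h1
    · rw [rep_symm h i (i+1)]; exact h1
  exact lt_of_le_of_ne (rep_nonneg h i (i+1)) (Ne.symm hne)

lemma hAzero (i j : Fin n) (hij : i ≠ j) (h1 : i ≠ j + 1) (h2 : j ≠ i + 1) : A i j = 0 := by
  by_contra hA
  have := (adj_char hn A hcyc i j).mp ⟨hij, Or.inl hA⟩
  tauto

lemma supp_adj (h : IsCPRep A L) {b : Fin n → ℝ} (hb : b ∈ L) {u v : Fin n}
    (hu : b u ≠ 0) (hv : b v ≠ 0) (huv : u ≠ v) : u = v + 1 ∨ v = u + 1 := by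
  have hbu : 0 < b u := lt_of_le_of_ne (h.1 b hb u) (Ne.symm hu)
  have hbv : 0 < b v := lt_of_le_of_ne (h.1 b hb v) (Ne.symm hv)
  have hpos : 0 < b u * b v := mul_pos hbu hbv
  have hle := rep_term_le h hb u v
  have hA : A u v ≠ 0 := ne_of_gt (lt_of_lt_of_le hpos hle)
  exact (adj_char hn A hcyc u v).mp ⟨huv, Or.inl hA⟩

lemma cov_unique (h : IsCPRep A L) {b : Fin n → ℝ} (hb : b ∈ L) {i j : Fin n}
    (hi : b i ≠ 0 ∧ b (i+1) ≠ 0) (hj : b j ≠ 0 ∧ b (j+1) ≠ 0) : i = j := by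
  by_contra hij
  rcases supp_adj hn hcyc h hb hi.1 hj.1 hij with hc | hc
  · -- i = j + 1
    have h1 : b (j + 1 + 1) ≠ 0 := by rw [← hc]; exact hi.2
    rcases supp_adj hn hcyc h hb hj.1 h1 (Ne.symm (fne2 hn j)) with h2 | h2
    · exact fne3 hn j h2.symm
    · exact fne1 hn (j+1) h2
  · -- j = i + 1
    have h1 : b (i + 1 + 1) ≠ 0 := by rw [← hc]; exact hj.2
    rcases supp_adj hn hcyc h hb hi.1 h1 (Ne.symm (fne2 hn i)) with h2 | h2
    · exact fne3 hn i h2.symm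
    · exact fne1 hn (i+1) h2

lemma supp_two (h : IsCPRep A L) {b : Fin n → ℝ} (hb : b ∈ L) {i : Fin n}
    (hi : b i ≠ 0) (hi1 : b (i+1) ≠ 0) {j : Fin n} (hji : j ≠ i) (hji1 : j ≠ i + 1) :
    b j = 0 := by
  by_contra hj
  rcases supp_adj hn hcyc h hb hj hi hji with h1 | h1
  · exact hji1 h1
  · -- i = j + 1
    rcases supp_adj hn hcyc h hb hj hi1 hji1 with h2 | h2
    · -- j = i + 1 + 1
      rw [h1] at h2
      exact fne3 hn j h2.symm
    · -- i + 1 = j + 1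
      exact hji (add_right_cancel h2).symm

lemma cover (h : IsCPRep A L) (i : Fin n) : ∃ b, b ∈ L ∧ b i ≠ 0 ∧ b (i+1) ≠ 0 := by
  by_contra hc
  push_neg at hc
  have hz : (L.map fun b => b i * b (i+1)).sum = 0 := by
    apply Multiset.sum_eq_zero
    intro x hx
    obtain ⟨b, hb, rfl⟩ := Multiset.mem_map.mp hx
    by_cases hbi : b i = 0
    · rw [hbi, zero_mul]
    · rw [hc b hb hbi, mul_zero]
  have := hApos hn hcyc h i
  rw [rep_entry h, hz] at this
  exact lt_irrefl 0 this

lemma card_ge (h : IsCPRep A L) : n ≤ Multiset.card L := by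
  classical
  choose F hFmem hFcov using cover hn hcyc h
  have hFinj : Function.Injective F := by
    intro i j hij
    have hcovj : F i j ≠ 0 ∧ F i (j+1) ≠ 0 := by rw [hij]; exact hFcov j
    exact cov_unique hn hcyc h (hFmem i) (hFcov i) hcovj
  calc n = (Finset.univ.image F).card := by
        rw [Finset.card_image_of_injective _ hFinj, Finset.card_univ, Fintype.card_fin]
    _ ≤ L.toFinset.card := by
        apply Finset.card_le_card
        intro x hx
        obtain ⟨i, _, rfl⟩ := Finset.mem_image.mp hx
        exact Multiset.mem_toFinset.mpr (hFmem i)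
    _ ≤ Multiset.card L := Multiset.toFinset_card_le L

lemma rep_struct (h : IsCPRep A L) (hcard : Multiset.card L = n) :
    ∃ p q : Fin n → ℝ, (∀ i, 0 < p i) ∧ (∀ i, 0 < q i) ∧
      (∀ i, p i * q i = A i (i+1)) ∧
      (∀ k : Fin n, A (k+1) (k+1) = p (k+1)^2 + q k^2) ∧
      L = Multiset.map (fun i => fun j => if j = i then p i else if j = i+1 then q i else (0:ℝ))
            Finset.univ.val := by
  classical
  choose F hFmem hFcov using cover hn hcyc h
  have hFinj : Function.Injective F := by
    intro i j hij
    have hcovj : F i j ≠ 0 ∧ F i (j+1) ≠ 0 := by rw [hij]; exact hFcov j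
    exact cov_unique hn hcyc h (hFmem i) (hFcov i) hcovj
  have hnd : (Multiset.map F Finset.univ.val).Nodup :=
    Multiset.Nodup.map hFinj Finset.univ.nodup
  have hML : Multiset.map F Finset.univ.val ≤ L := by
    rw [Multiset.le_iff_subset hnd]
    intro x hx
    obtain ⟨i, _, rfl⟩ := Multiset.mem_map.mp hx
    exact hFmem i
  have hcards : Multiset.card L ≤ Multiset.card (Multiset.map F Finset.univ.val) := by
    rw [Multiset.card_map, hcard]
    have : Multiset.card (Finset.univ : Finset (Fin n)).val = Finset.univ.card := rfl
    rw [this, Finset.card_univ, Fintype.card_fin]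
  have hLM : L = Multiset.map F Finset.univ.val := (Multiset.eq_of_le_of_card_le hML hcards).symm
  set p : Fin n → ℝ := fun i => F i i with hp
  set q : Fin n → ℝ := fun i => F i (i+1) with hq
  have hsum : ∀ u v : Fin n, A u v = ∑ k : Fin n, F k u * F k v := by
    intro u v
    rw [rep_entry h, hLM, Multiset.map_map]
    rfl
  have hppos : ∀ i, 0 < p i := fun i =>
    lt_of_le_of_ne (h.1 (F i) (hFmem i) i) (Ne.symm (hFcov i).1)
  have hqpos : ∀ i, 0 < q i := fun i =>
    lt_of_le_of_ne (h.1 (F i) (hFmem i) (i+1)) (Ne.symm (hFcov i).2)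
  have hedge : ∀ i, p i * q i = A i (i+1) := by
    intro i
    rw [hsum i (i+1)]
    rw [Finset.sum_eq_single i]
    · intro k _ hk
      by_cases hFki : F k i = 0
      · rw [hFki, zero_mul]
      · -- i ∈ supp F k, i ≠ k, so i = k+1; then i+1 = k+1+1 not in supp
        have hik : i = k + 1 := by
          by_contra hik
          exact hFki (supp_two hn hcyc h (hFmem k) (hFcov k).1 (hFcov k).2
            (Ne.symm hk) hik)
        have : F k (i + 1) = 0 := by
          apply supp_two hn hcyc h (hFmem k) (hFcov k).1 (hFcov k).2
          · rw [hik]; exact fne2 hn k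
          · rw [hik]
            exact fne1 hn (k+1)
        rw [this, mul_zero]
    · intro hni
      exact absurd (Finset.mem_univ i) hni
  have hdiag : ∀ k : Fin n, A (k+1) (k+1) = p (k+1)^2 + q k^2 := by
    intro k
    rw [hsum (k+1) (k+1)]
    have hvanish : ∀ j ∈ Finset.univ, j ∉ ({k, k+1} : Finset (Fin n)) →
        F j (k+1) * F j (k+1) = 0 := by
      intro j _ hj
      simp only [Finset.mem_insert, Finset.mem_singleton] at hj
      push_neg at hj
      have : F j (k+1) = 0 := by
        apply supp_two hn hcyc h (hFmem j) (hFcov j).1 (hFcov j).2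
        · exact fun hcon => hj.2 hcon.symm
        · intro hcon
          exact hj.1 (add_right_cancel hcon).symm
      rw [this, zero_mul]
    rw [← Finset.sum_subset (Finset.subset_univ ({k, k+1} : Finset (Fin n))) hvanish]
    rw [Finset.sum_pair (Ne.symm (fne1 hn k))]
    ring
  refine ⟨p, q, hppos, hqpos, hedge, hdiag, ?_⟩
  rw [hLM]
  apply Multiset.map_congr rfl
  intro i _
  funext j
  by_cases hji : j = i
  · rw [hji]; simp; rfl
  · by_cases hji1 : j = i + 1
    · rw [hji1]
      simp only [if_neg (fne1 hn i), if_pos rfl]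
      rfl
    · simp only [if_neg hji, if_neg hji1]
      exact supp_two hn hcyc h (hFmem i) (hFcov i).1 (hFcov i).2 hji hji1
end rep

section link
variable {n : ℕ} [NeZero n]

noncomputable def aSeq (A : Matrix (Fin n) (Fin n) ℝ) : ℕ → ℝ := fun k => A (k : Fin n) (k : Fin n)
noncomputable def cSeq (A : Matrix (Fin n) (Fin n) ℝ) : ℕ → ℝ :=
  fun k => (A (k : Fin n) ((k : Fin n) + 1))^2

variable (hn : 4 ≤ n) {A : Matrix (Fin n) (Fin n) ℝ}
include hn

/-- The orbit of the recursion matches the squared `p`-values of a structured rep. -/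
lemma struct_tau {p q : Fin n → ℝ} (hppos : ∀ i, 0 < p i)
    (hedge : ∀ i, p i * q i = A i (i+1))
    (hdiag : ∀ k : Fin n, A (k+1) (k+1) = p (k+1)^2 + q k^2) :
    ∀ m : ℕ, tau (aSeq A) (cSeq A) (p 0 ^ 2) m = p ((m : ℕ) : Fin n) ^ 2 := by
  intro m
  induction m with
  | zero => simp
  | succ m ih =>
    have hcast : ((m + 1 : ℕ) : Fin n) = ((m : ℕ) : Fin n) + 1 := fcast_succ hn m
    set i : Fin n := ((m : ℕ) : Fin n) with hi
    have hpi : p i ≠ 0 := ne_of_gt (hppos i)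
    rw [tau_succ, ih]
    have ha : aSeq A (m+1) = A (i+1) (i+1) := by
      simp only [aSeq, hcast]
    have hc : cSeq A m = (p i * q i)^2 := by
      simp only [cSeq, hedge]; rfl
    rw [ha, hc, hdiag i, hcast]
    field_simp
    ring

/-- The vectors of the factorization associated to a root `x`. -/
noncomputable def mkVec (A : Matrix (Fin n) (Fin n) ℝ) (x : ℝ) (i : Fin n) : Fin n → ℝ :=
  fun j => if j = i then Real.sqrt (tau (aSeq A) (cSeq A) x i.val)
    else if j = i+1 then A i (i+1) / Real.sqrt (tau (aSeq A) (cSeq A) x i.val) else 0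

omit hn in
lemma mkVec_self (A : Matrix (Fin n) (Fin n) ℝ) (x : ℝ) (i : Fin n) :
    mkVec A x i i = Real.sqrt (tau (aSeq A) (cSeq A) x i.val) := by
  simp [mkVec]

lemma mkVec_succ (A : Matrix (Fin n) (Fin n) ℝ) (x : ℝ) (i : Fin n) :
    mkVec A x i (i+1) = A i (i+1) / Real.sqrt (tau (aSeq A) (cSeq A) x i.val) := by
  simp only [mkVec, if_neg (fne1 hn i), if_pos rfl]
  simp

omit hn in
lemma mkVec_other (A : Matrix (Fin n) (Fin n) ℝ) (x : ℝ) (i : Fin n) {j : Fin n}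
    (hj : j ≠ i) (hj1 : j ≠ i + 1) : mkVec A x i j = 0 := by
  simp only [mkVec, if_neg hj, if_neg hj1]

variable (hcyc : matGraph A = SimpleGraph.cycleGraph n) {L0 : Multiset (Fin n → ℝ)}
include hcyc

lemma root_to_rep (h0 : IsCPRep A L0) {x : ℝ}
    (horb : ∀ k, k ≤ n → 0 < tau (aSeq A) (cSeq A) x k)
    (hclose : tau (aSeq A) (cSeq A) x n = x) :
    IsCPRep A (Multiset.map (mkVec A x) (Finset.univ : Finset (Fin n)).val) ∧
      Multiset.card (Multiset.map (mkVec A x) (Finset.univ : Finset (Fin n)).val) = n := by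
  classical
  set t : ℕ → ℝ := tau (aSeq A) (cSeq A) x with ht
  set p : Fin n → ℝ := fun i => Real.sqrt (t i.val) with hp
  have hppos : ∀ i : Fin n, 0 < p i := fun i => Real.sqrt_pos.mpr (horb i.val i.isLt.le)
  have hpsq : ∀ i : Fin n, p i ^ 2 = t i.val := fun i =>
    Real.sq_sqrt (horb i.val i.isLt.le).le
  set q : Fin n → ℝ := fun i => A i (i+1) / p i with hq
  have hqpos : ∀ i : Fin n, 0 < q i := fun i =>
    div_pos (hApos hn hcyc h0 i) (hppos i)
  have mkp : ∀ i : Fin n, mkVec A x i i = p i := fun i => mkVec_self A x i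
  have mkq : ∀ i : Fin n, mkVec A x i (i+1) = q i := fun i => mkVec_succ hn A x i
  have hpq : ∀ i : Fin n, p i * q i = A i (i+1) := by
    intro i
    have hpi : p i ≠ 0 := ne_of_gt (hppos i)
    rw [hq]
    field_simp
  have hqsq : ∀ i : Fin n, q i ^ 2 = cSeq A i.val / t i.val := by
    intro i
    have hcv : ((i.val : ℕ) : Fin n) = i := Fin.cast_val_eq_self i
    rw [hq, div_pow, hpsq]
    rw [cSeq, hcv]
  have hdiag : ∀ k : Fin n, A (k+1) (k+1) = p (k+1)^2 + q k^2 := by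
    intro k
    rcases Nat.lt_or_ge (k.val + 1) n with hlt | hge
    · have hval : (k+1).val = k.val + 1 := fsucc_val hn k hlt
      have hcasts : ((k.val + 1 : ℕ) : Fin n) = k + 1 := by
        rw [fcast_succ hn, Fin.cast_val_eq_self]
      have htau : t (k.val + 1) = aSeq A (k.val + 1) - cSeq A k.val / t k.val := tau_succ _ _ _ _
      have ha : aSeq A (k.val + 1) = A (k+1) (k+1) := by rw [aSeq, hcasts]
      rw [hpsq (k+1), hval, htau, ha, hqsq k]
      ring
    · have hx : k.val + 1 = n := by omega
      have hk10 : k + 1 = 0 := fsucc_last hn k hx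
      have hval : (k+1).val = 0 := by rw [hk10]; rfl
      have hrec : t n = aSeq A n - cSeq A (n-1) / t (n-1) := by
        have hn1 : n - 1 + 1 = n := by omega
        conv_lhs => rw [← hn1]
        rw [show t (n-1+1) = aSeq A (n-1+1) - cSeq A (n-1) / t (n-1) from tau_succ _ _ _ _, hn1]
      have ha : aSeq A n = A (k+1) (k+1) := by
        rw [aSeq, Fin.natCast_self, hk10]
      have hkv : k.val = n - 1 := by omega
      have hx0 : t 0 = x := rfl
      rw [hpsq (k+1), hval, hx0, ← hclose, hrec, ha, hqsq k, hkv]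
      ring
  -- the summation identity
  have hsum : ∀ u v : Fin n, (∑ k : Fin n, mkVec A x k u * mkVec A x k v) = A u v := by
    have key : ∀ v : Fin n, (∑ k : Fin n, mkVec A x k v * mkVec A x k v) = A v v := by
      intro v
      obtain ⟨d, hd⟩ := fexists_pred hn v
      have hdv : d ≠ v := by
        intro hc
        rw [← hc] at hd
        exact fne1 hn d hd.symm
      have hsub : ∀ j ∈ Finset.univ, j ∉ ({d, v} : Finset (Fin n)) →
          mkVec A x j v * mkVec A x j v = 0 := by
        intro j _ hj
        simp only [Finset.mem_insert, Finset.mem_singleton] at hj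
        push_neg at hj
        have hz : mkVec A x j v = 0 := by
          apply mkVec_other
          · exact fun hc => hj.2 hc.symm
          · intro hc
            apply hj.1
            rw [hd] at hc
            exact (add_right_cancel hc).symm
        rw [hz, zero_mul]
      rw [← Finset.sum_subset (Finset.subset_univ ({d, v} : Finset (Fin n))) hsub,
        Finset.sum_pair hdv]
      have h1 : mkVec A x d v = q d := by rw [hd]; exact mkq d
      have h2 : mkVec A x v v = p v := mkp v
      rw [h1, h2, hd, hdiag d]
      ring
    intro u v
    by_cases huv : v = u
    · rw [huv]; exact key u
    · by_cases hv1 : v = u + 1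
      · subst hv1
        rw [Finset.sum_eq_single u]
        · rw [mkp u, mkq u]; exact hpq u
        · intro k _ hk
          by_cases hku : mkVec A x k u = 0
          · rw [hku, zero_mul]
          · have huk : u = k + 1 := by
              by_contra hc
              exact hku (mkVec_other A x k (Ne.symm hk) hc)
            have : mkVec A x k (u+1) = 0 := by
              apply mkVec_other
              · rw [huk]; exact fne2 hn k
              · rw [huk]; exact fne1 hn (k+1)
            rw [this, mul_zero]
        · intro hni; exact absurd (Finset.mem_univ u) hni
      · by_cases hu1 : u = v + 1
        · subst hu1
          rw [Finset.sum_eq_single v]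
          · rw [mkp v, mkq v]
            rw [rep_symm h0 (v+1) v]
            rw [← hpq v]; ring
          · intro k _ hk
            by_cases hkv : mkVec A x k v = 0
            · rw [hkv, mul_zero]
            · have hvk : v = k + 1 := by
                by_contra hc
                exact hkv (mkVec_other A x k (Ne.symm hk) hc)
              have : mkVec A x k (v+1) = 0 := by
                apply mkVec_other
                · rw [hvk]; exact fne2 hn k
                · rw [hvk]; exact fne1 hn (k+1)
              rw [this, zero_mul]
          · intro hni; exact absurd (Finset.mem_univ v) hni
        · have hz : A u v = 0 := hAzero hn hcyc u v (Ne.symm huv) hu1 hv1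
          rw [hz]
          apply Finset.sum_eq_zero
          intro k _
          by_cases hku : mkVec A x k u = 0
          · rw [hku, zero_mul]
          · by_cases hkv : mkVec A x k v = 0
            · rw [hkv, mul_zero]
            · exfalso
              have hu' : u = k ∨ u = k + 1 := by
                by_contra hc
                push_neg at hc
                exact hku (mkVec_other A x k hc.1 hc.2)
              have hv' : v = k ∨ v = k + 1 := by
                by_contra hc
                push_neg at hc
                exact hkv (mkVec_other A x k hc.1 hc.2)
              rcases hu' with rfl | rfl
              · rcases hv' with hv2 | hv2
                · exact huv hv2            -- v = u
                · exact hv1 hv2            -- v = u + 1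
              · rcases hv' with hv2 | hv2
                · exact hu1 (by rw [hv2])  -- u = v + 1
                · exact huv hv2            -- v = u
  constructor
  · refine ⟨?_, ?_, ?_, ?_⟩
    · intro b hb i
      obtain ⟨k, _, rfl⟩ := Multiset.mem_map.mp hb
      by_cases h1 : i = k
      · rw [h1, mkp k]; exact (hppos k).le
      · by_cases h2 : i = k + 1
        · rw [h2, mkq k]; exact (hqpos k).le
        · rw [mkVec_other A x k h1 h2]
    · intro b hb
      obtain ⟨k, _, rfl⟩ := Multiset.mem_map.mp hb
      intro hb0
      have : mkVec A x k k = 0 := by rw [hb0]; rfl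
      rw [mkp k] at this
      exact ne_of_gt (hppos k) this
    · -- pairwise linear independence
      have hli : ∀ i j : Fin n, i ≠ j →
          LinearIndependent ℝ ![mkVec A x i, mkVec A x j] := by
        intro i j hij
        have hjne : mkVec A x j ≠ 0 := by
          intro hc
          have : mkVec A x j j = 0 := by rw [hc]; rfl
          rw [mkp j] at this
          exact ne_of_gt (hppos j) this
        by_cases hij1 : i = j + 1
        · -- use coordinate i + 1
          apply li_pair _ _ (i+1)
          · rw [mkq i]; exact ne_of_gt (hqpos i)
          · apply mkVec_other
            · rw [hij1]; exact fne2 hn j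
            · rw [hij1]; exact fne1 hn (j+1)
          · exact hjne
        · -- use coordinate i
          apply li_pair _ _ i
          · rw [mkp i]; exact ne_of_gt (hppos i)
          · exact mkVec_other A x j hij hij1
          · exact hjne
      refine ⟨(List.finRange n).map (mkVec A x), ?_, ?_⟩
      · rw [Fin.univ_def]; rfl
      · rw [List.pairwise_map]
        exact List.Pairwise.imp_of_mem (fun {a b} _ _ hab => hli a b hab)
          (List.nodup_finRange n)
    · -- the sum
      apply Matrix.ext
      intro i j
      rw [msum_apply, Multiset.map_map, Multiset.map_map]
      exact hsum i j
  · rw [Multiset.card_map]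
    exact Finset.card_fin n
end link

section final
variable {n : ℕ} [NeZero n] (hn : 4 ≤ n) {A : Matrix (Fin n) (Fin n) ℝ}
  (hcyc : matGraph A = SimpleGraph.cycleGraph n) {L0 L : Multiset (Fin n → ℝ)}
include hn hcyc

lemma exists_rep_n (h0 : IsCPRep A L0) :
    ∃ L', IsCPRep A L' ∧ Multiset.card L' = n := by
  classical
  set T : Fin n → ℝ := fun i =>
    ((L0.filter (fun b => b i ≠ 0 ∧ b (i+1) ≠ 0)).map (fun b => (b i)^2)).sum with hT
  set S2 : Fin n → ℝ := fun i =>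
    ((L0.filter (fun b => b i ≠ 0 ∧ b (i+1) ≠ 0)).map (fun b => (b (i+1))^2)).sum with hS2
  have hTpos : ∀ i, 0 < T i := by
    intro i
    obtain ⟨b, hb, hbi, hbi1⟩ := cover hn hcyc h0 i
    have hmem : b ∈ L0.filter (fun b => b i ≠ 0 ∧ b (i+1) ≠ 0) :=
      Multiset.mem_filter.mpr ⟨hb, hbi, hbi1⟩
    have hle : (b i)^2 ≤ T i := by
      apply Multiset.single_le_sum
      · intro y hy
        obtain ⟨c, _, rfl⟩ := Multiset.mem_map.mp hy
        positivity
      · exact Multiset.mem_map_of_mem _ hmem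
    have hlt : 0 < (b i)^2 := by positivity
    linarith
  have hCS : ∀ i : Fin n, (A i (i+1))^2 ≤ T i * S2 i := by
    intro i
    have hfsplit : A i (i+1) =
        ((L0.filter (fun b => b i ≠ 0 ∧ b (i+1) ≠ 0)).map (fun b => b i * b (i+1))).sum := by
      rw [rep_entry h0 i (i+1)]
      conv_lhs => rw [← Multiset.filter_add_not (fun b => b i ≠ 0 ∧ b (i+1) ≠ 0) L0]
      rw [Multiset.map_add, Multiset.sum_add]
      have hz : ((L0.filter (fun b => ¬(b i ≠ 0 ∧ b (i+1) ≠ 0))).map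
          (fun b => b i * b (i+1))).sum = 0 := by
        apply Multiset.sum_eq_zero
        intro y hy
        obtain ⟨c, hc, rfl⟩ := Multiset.mem_map.mp hy
        have hnc := (Multiset.mem_filter.mp hc).2
        push_neg at hnc
        by_cases h1 : c i = 0
        · rw [h1, zero_mul]
        · rw [hnc h1, mul_zero]
      rw [hz, add_zero]
    rw [hfsplit]
    apply ms_cauchy_schwarz
    · intro b hb
      exact h0.1 b (Multiset.mem_of_mem_filter hb) i
    · intro b hb
      exact h0.1 b (Multiset.mem_of_mem_filter hb) (i+1)
  have hdisj : ∀ i : Fin n, S2 i + T (i+1) ≤ A (i+1) (i+1) := by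
    intro i
    rw [rep_entry h0 (i+1) (i+1)]
    have hmc : (L0.map fun b => b (i+1) * b (i+1)) = (L0.map fun b => (b (i+1))^2) :=
      Multiset.map_congr rfl (fun b _ => by ring)
    rw [hmc]
    apply filter_two_le
    · intro b hb hboth
      exact fne1 hn i (cov_unique hn hcyc h0 hb hboth.2 hboth.1)
    · intro b hb
      positivity
  set tseq : ℕ → ℝ := fun k => T ((k : ℕ) : Fin n) with htseq
  have hcpos : ∀ k : ℕ, 0 < cSeq A k := fun k => by
    have := hApos hn hcyc h0 ((k : ℕ) : Fin n)
    rw [cSeq]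
    positivity
  have htpos : ∀ k, k ≤ n → 0 < tseq k := fun k _ => hTpos _
  have htn : tseq n = tseq 0 := by
    simp only [htseq, Fin.natCast_self, Nat.cast_zero]
  have hsub : ∀ k, k < n → tseq (k+1) ≤ aSeq A (k+1) - cSeq A k / tseq k := by
    intro k _
    have hcast : ((k + 1 : ℕ) : Fin n) = ((k : ℕ) : Fin n) + 1 := fcast_succ hn k
    set i : Fin n := ((k : ℕ) : Fin n)
    have h1 : tseq (k+1) = T (i+1) := by rw [htseq]; simp only [hcast]
    have h2 : aSeq A (k+1) = A (i+1) (i+1) := by rw [aSeq]; simp only [hcast]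
    have h3 : cSeq A k = (A i (i+1))^2 := rfl
    have h4 : tseq k = T i := rfl
    rw [h1, h2, h3, h4]
    have h5 := hdisj i
    have h6 : (A i (i+1))^2 / T i ≤ S2 i := by
      rw [div_le_iff₀ (hTpos i)]
      calc (A i (i+1))^2 ≤ T i * S2 i := hCS i
        _ = S2 i * T i := by ring
    linarith
  obtain ⟨x, hx0, horb, hclose⟩ := exists_root n (by omega) (aSeq A) (cSeq A) tseq
    (fun k _ => hcpos k) htpos htn hsub
  obtain ⟨hrep, hcard⟩ := root_to_rep hn hcyc h0 horb hclose
  exact ⟨_, hrep, hcard⟩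

lemma cpRank_eq (hCP : IsCP A) : cpRank A = n := by
  obtain ⟨L0, h0⟩ := hCP
  obtain ⟨L', h', hcard'⟩ := exists_rep_n hn hcyc h0
  apply le_antisymm
  · show sInf {k | ∃ L, IsCPRep A L ∧ Multiset.card L = k} ≤ n
    apply Nat.sInf_le
    show ∃ L'', IsCPRep A L'' ∧ Multiset.card L'' = n
    exact ⟨L', h', hcard'⟩
  · show n ≤ sInf {k | ∃ L, IsCPRep A L ∧ Multiset.card L = k}
    apply le_csInf
    · refine ⟨n, ?_⟩
      show ∃ L'', IsCPRep A L'' ∧ Multiset.card L'' = n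
      exact ⟨L', h', hcard'⟩
    · rintro m ⟨Lm, hLm, rfl⟩
      exact card_ge hn hcyc hLm

lemma min_classify (h : IsCPRep A L) (hcard : Multiset.card L = n) :
    ∃ x : ℝ, (∀ k, k ≤ n → 0 < tau (aSeq A) (cSeq A) x k) ∧
      tau (aSeq A) (cSeq A) x n = x ∧
      L = Multiset.map (mkVec A x) (Finset.univ : Finset (Fin n)).val := by
  obtain ⟨p, q, hppos, hqpos, hedge, hdiag, hLM⟩ := rep_struct hn hcyc h hcard
  have htau := struct_tau hn hppos hedge hdiag
  refine ⟨p 0 ^ 2, ?_, ?_, ?_⟩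
  · intro k _
    rw [htau k]
    exact pow_pos (hppos _) 2
  · rw [htau n, Fin.natCast_self]
  · rw [hLM]
    apply Multiset.map_congr rfl
    intro i _
    funext j
    have hpi : Real.sqrt (tau (aSeq A) (cSeq A) (p 0 ^ 2) i.val) = p i := by
      rw [htau i.val, Fin.cast_val_eq_self]
      exact Real.sqrt_sq (hppos i).le
    by_cases h1 : j = i
    · rw [h1]
      rw [if_pos rfl]
      rw [mkVec_self, hpi]
    · by_cases h2 : j = i + 1
      · rw [h2]
        rw [if_neg (fne1 hn i), if_pos rfl]
        rw [mkVec_succ hn, hpi, ← hedge i]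
        have hpne : p i ≠ 0 := ne_of_gt (hppos i)
        field_simp
      · simp only [if_neg h1, if_neg h2]
        rw [mkVec_other A _ i h1 h2]

lemma no_three {L1 L2 L3 : Multiset (Fin n → ℝ)}
    (h1 : IsMinCPRep A L1) (h2 : IsMinCPRep A L2) (h3 : IsMinCPRep A L3)
    (d12 : L1 ≠ L2) (d13 : L1 ≠ L3) (d23 : L2 ≠ L3) : False := by
  have hrk : cpRank A = n := cpRank_eq hn hcyc ⟨L1, h1.1⟩
  have hc1 : Multiset.card L1 = n := by rw [h1.2, hrk]
  have hc2 : Multiset.card L2 = n := by rw [h2.2, hrk]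
  have hc3 : Multiset.card L3 = n := by rw [h3.2, hrk]
  obtain ⟨x1, hpos1, hcl1, he1⟩ := min_classify hn hcyc h1.1 hc1
  obtain ⟨x2, hpos2, hcl2, he2⟩ := min_classify hn hcyc h2.1 hc2
  obtain ⟨x3, hpos3, hcl3, he3⟩ := min_classify hn hcyc h3.1 hc3
  have hx12 : x1 ≠ x2 := fun hx => d12 (by rw [he1, he2, hx])
  have hx13 : x1 ≠ x3 := fun hx => d13 (by rw [he1, he3, hx])
  have hx23 : x2 ≠ x3 := fun hx => d23 (by rw [he2, he3, hx])
  have hm2 : n - 2 + 2 = n := by omega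
  have hroot : ∀ x, (∀ k, k ≤ n → 0 < tau (aSeq A) (cSeq A) x k) →
      tau (aSeq A) (cSeq A) x n = x → Qf (aSeq A) (cSeq A) (n-2) x = 0 := by
    intro x hpos hcl
    have hq := Qf_root (aSeq A) (cSeq A) (n-2) x (fun k hk => hpos k (by omega))
    rw [hm2] at hq
    rw [hq, hcl]
    ring
  have q1 := hroot x1 hpos1 hcl1
  have q2 := hroot x2 hpos2 hcl2
  have q3 := hroot x3 hpos3 hcl3
  rw [Qf_eq_quad] at q1 q2 q3
  obtain ⟨hqa, hqb, hqc⟩ := quad_vanish _ _ _ x1 x2 x3 hx12 hx23 hx13 q1 q2 q3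
  have hcpos : ∀ k : ℕ, 0 < cSeq A k := fun k => by
    have := hApos hn hcyc h1.1 ((k : ℕ) : Fin n)
    rw [cSeq]
    positivity
  have hneg := qC_neg (aSeq A) (cSeq A) (n-2) (by omega) x1
    (fun k _ => hcpos k)
    (fun k hk => hpos1 k (by omega))
    (by rw [hm2]; exact hcl1)
  linarith
end final
end CPcycle

/-- A completely positive matrix whose graph is the `n`-cycle, `n ≥ 4`, has at most two
minimal CP factorizations. -/
theorem stmt_7 (n : ℕ) (hn : 4 ≤ n) (A : Matrix (Fin n) (Fin n) ℝ)
    (hCP : IsCP A) (hcyc : matGraph A = SimpleGraph.cycleGraph n) :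
    ∃ L₁ L₂ : Multiset (Fin n → ℝ), ∀ L, IsMinCPRep A L → L = L₁ ∨ L = L₂ := by
  classical
  haveI : NeZero n := ⟨by omega⟩
  by_cases h1 : ∃ L, IsMinCPRep A L
  · obtain ⟨L₁, hL₁⟩ := h1
    by_cases h2 : ∃ L', IsMinCPRep A L' ∧ L' ≠ L₁
    · obtain ⟨L₂, hL₂, hne⟩ := h2
      refine ⟨L₁, L₂, fun L hL => ?_⟩
      by_contra hcon
      push_neg at hcon
      exact CPcycle.no_three hn hcyc hL₁ hL₂ hL (Ne.symm hne) (Ne.symm hcon.1) (Ne.symm hcon.2)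
    · refine ⟨L₁, L₁, fun L hL => Or.inl ?_⟩
      by_contra hne
      exact h2 ⟨L, hL, hne⟩
  · exact ⟨0, 0, fun L hL => absurd ⟨L, hL⟩ h1⟩
end
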